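/- arXiv:2309.10928 — 2 statements merged into one kernel-verified Lean document; each statement's English description precedes it below -/
import Mathlib

section
/- For any finite simple graph G, the polynomial F_G(x) = Σ_{F BCF} x^{|F|} does not depend on the choice of linear ordering of the edges of G used to define broken circuits. -/
open Finset

attribute [local instance] Classical.propDecidable

variable {V : Type} [Fintype V] [DecidableEq V]

open SimpleGraph

set_option linter.unusedSectionVars false


/-- `C` is the edge set of a cycle of `G`. -/
def IsCircuit (G : SimpleGraph V) (C : Finset (Sym2 V)) : Prop :=
  ∃ (v : V) (w : G.Walk v v), w.IsCycle ∧ C = w.edges.toFinset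

/-- `B` is a broken circuit of `G` w.r.t. the edge ordering `ord`. -/
def IsBrokenCircuit (G : SimpleGraph V) (ord : Sym2 V → ℕ) (B : Finset (Sym2 V)) : Prop :=
  ∃ C, IsCircuit G C ∧ ∃ e ∈ C, (∀ f ∈ C, ord f ≤ ord e) ∧ B = C.erase e

/-- `F` is a broken-circuit-free set of edges of `G`. -/
def IsBCF (G : SimpleGraph V) (ord : Sym2 V → ℕ) (F : Finset (Sym2 V)) : Prop :=
  F ⊆ G.edgeFinset ∧ ∀ B, IsBrokenCircuit G ord B → ¬ B ⊆ F

/-- The BCF generating function `F_G(x) = Σ_{F BCF} x^{|F|}`. -/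
noncomputable def bcfSum (G : SimpleGraph V) (ord : Sym2 V → ℕ) (x : ℝ) : ℝ :=
  ∑ F ∈ G.edgeFinset.powerset.filter (IsBCF G ord), x ^ F.card


/-- Transfer reachability downwards when every edge of `K` has reachable endpoints in `H`. -/
lemma reach_of_adj_reach {K H : SimpleGraph V} (h : ∀ u v, K.Adj u v → H.Reachable u v)
    {u v : V} (r : K.Reachable u v) : H.Reachable u v := by
  obtain ⟨w⟩ := r
  induction w with
  | nil => exact Reachable.refl _
  | cons ha p ih => exact (h _ _ ha).trans ih

/-- Graphs with the same reachability relation have the same number of components. -/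
lemma card_cc_congr {G H : SimpleGraph V}
    (h : ∀ u v, G.Reachable u v ↔ H.Reachable u v) :
    Nat.card G.ConnectedComponent = Nat.card H.ConnectedComponent := by
  refine Nat.card_congr ⟨Quot.map id (fun a b r => (h a b).1 r),
    Quot.map id (fun a b r => (h a b).2 r), ?_, ?_⟩
  · intro q; induction q using Quot.ind; rfl
  · intro q; induction q using Quot.ind; rfl

lemma card_cc_bot : Nat.card (⊥ : SimpleGraph V).ConnectedComponent = Fintype.card V := by
  rw [← Nat.card_eq_fintype_card]
  refine Nat.card_congr ⟨Quot.lift id (fun a b r => reachable_bot.mp r), Quot.mk _, ?_, fun a => rfl⟩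
  intro q; induction q using Quot.ind; rfl

set_option linter.unusedSectionVars false

/-- After removing an edge of a cycle, its endpoints remain reachable using only
the remaining edges of the cycle. -/
lemma cycle_reach {G : SimpleGraph V} {v : V} (w : G.Walk v v) (hw : w.IsCycle)
    {a b : V} (he : s(a, b) ∈ w.edges) :
    (SimpleGraph.fromEdgeSet (↑(w.edges.toFinset.erase s(a, b)) : Set (Sym2 V))).Reachable a b := by
  set H := SimpleGraph.fromEdgeSet (↑w.edges.toFinset : Set (Sym2 V)) with hH
  have hsub : ∀ e ∈ w.edges, e ∈ H.edgeSet := by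
    intro e heW
    rw [hH, edgeSet_fromEdgeSet]
    exact ⟨by simpa using heW, G.not_isDiag_of_mem_edgeSet (w.edges_subset_edgeSet heW)⟩
  have he' : s(a, b) ∈ (w.transfer H hsub).edges := by
    rwa [Walk.edges_transfer]
  obtain ⟨hadj, hr⟩ := (H.adj_and_reachable_delete_edges_iff_exists_cycle).mpr
    ⟨v, w.transfer H hsub, hw.transfer hsub, he'⟩
  refine hr.mono ?_
  intro x y hxy
  rw [deleteEdges, sdiff_adj] at hxy
  obtain ⟨h1, h2⟩ := hxy
  rw [hH, fromEdgeSet_adj] at h1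
  rw [fromEdgeSet_adj] at h2
  rw [fromEdgeSet_adj]
  refine ⟨?_, h1.2⟩
  have hne : s(x, y) ≠ s(a, b) := by
    intro hEq
    exact h2 ⟨by simp [hEq], h1.2⟩
  have hm : s(x, y) ∈ w.edges.toFinset := by exact_mod_cast h1.1
  exact Finset.mem_coe.mpr (Finset.mem_erase.mpr ⟨hne, hm⟩)

/-- Inserting an edge whose endpoints are joined by the rest of a cycle lying in `T`
does not change the number of connected components. -/
lemma card_cc_insert {G : SimpleGraph V} {v : V} (w : G.Walk v v) (hw : w.IsCycle)
    {e : Sym2 V} (he : e ∈ w.edges) (T : Finset (Sym2 V))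
    (hT : w.edges.toFinset.erase e ⊆ T) :
    Nat.card (SimpleGraph.fromEdgeSet (↑(insert e T) : Set (Sym2 V))).ConnectedComponent
      = Nat.card (SimpleGraph.fromEdgeSet (↑T : Set (Sym2 V))).ConnectedComponent := by
  apply card_cc_congr
  intro u v'
  constructor
  · refine reach_of_adj_reach ?_
    intro x y hxy
    rw [fromEdgeSet_adj] at hxy
    obtain ⟨hmem, hne⟩ := hxy
    rcases Finset.mem_insert.mp (by simpa using hmem) with hEq | hTmem
    · have hx : s(x, y) ∈ w.edges := hEq ▸ he
      have := cycle_reach w hw hx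
      refine this.mono (fromEdgeSet_mono ?_)
      rw [hEq]
      exact_mod_cast hT
    · exact ((fromEdgeSet_adj _).mpr ⟨by simpa using hTmem, hne⟩).reachable
  · exact fun h => h.mono (fromEdgeSet_mono (by exact_mod_cast Finset.subset_insert e T))

/-- Deleting a bridge-like edge (endpoints not reachable after deletion) increases
the component count by exactly one. -/
lemma card_cc_delete {H : SimpleGraph V} {a b : V} (hab : H.Adj a b)
    (hnr : ¬ (H \ SimpleGraph.fromEdgeSet {s(a, b)}).Reachable a b) :
    Nat.card (H \ SimpleGraph.fromEdgeSet {s(a, b)}).ConnectedComponent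
      = Nat.card H.ConnectedComponent + 1 := by
  set H' := H \ SimpleGraph.fromEdgeSet {s(a, b)} with hH'
  have hle : H' ≤ H := sdiff_le
  -- trichotomy
  have tri : ∀ u v : V, H.Reachable u v →
      H'.Reachable u v ∨ (H'.Reachable u a ∧ H'.Reachable b v)
        ∨ (H'.Reachable u b ∧ H'.Reachable a v) := by
    intro u v huv
    obtain ⟨w⟩ := huv
    induction w with
    | nil => exact Or.inl (Reachable.refl _)
    | @cons u u' v h p ih =>
      by_cases hc : s(u, u') = s(a, b)
      · rcases Sym2.eq_iff.mp hc with ⟨rfl, rfl⟩ | ⟨rfl, rfl⟩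
        · rcases ih with r | ⟨r1, r2⟩ | ⟨r1, r2⟩
          · exact Or.inr (Or.inl ⟨Reachable.refl _, r⟩)
          · exact absurd (r1.symm) hnr
          · exact Or.inl r2
        · rcases ih with r | ⟨r1, r2⟩ | ⟨r1, r2⟩
          · exact Or.inr (Or.inr ⟨Reachable.refl _, r⟩)
          · exact Or.inl r2
          · exact absurd r1 hnr
      · have h' : H'.Adj u u' := by
          rw [hH', sdiff_adj]
          refine ⟨h, ?_⟩
          rw [fromEdgeSet_adj]
          rintro ⟨hmem, -⟩
          exact hc (by simpa using hmem)
        rcases ih with r | ⟨r1, r2⟩ | ⟨r1, r2⟩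
        · exact Or.inl (h'.reachable.trans r)
        · exact Or.inr (Or.inl ⟨h'.reachable.trans r1, r2⟩)
        · exact Or.inr (Or.inr ⟨h'.reachable.trans r1, r2⟩)
  -- the restricted map is a bijection
  set b₀ := H'.connectedComponentMk b with hb₀
  have hRab : H.Reachable a b := hab.reachable
  let φ : H'.ConnectedComponent → H.ConnectedComponent :=
    Quot.map id (fun u v r => r.mono hle)
  have φmk : ∀ u : V, φ (H'.connectedComponentMk u) = H.connectedComponentMk u := fun _ => rfl
  have hbij : Function.Bijective (fun y : {y : H'.ConnectedComponent // y ≠ b₀} => φ y.1) := by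
    constructor
    · rintro ⟨y, hy⟩ ⟨z, hz⟩ hEq
      induction y using SimpleGraph.ConnectedComponent.ind with | _ u =>
      induction z using SimpleGraph.ConnectedComponent.ind with | _ v =>
      simp only [φmk] at hEq
      have hr : H.Reachable u v := SimpleGraph.ConnectedComponent.exact hEq
      rcases tri u v hr with r | ⟨r1, r2⟩ | ⟨r1, r2⟩
      · exact Subtype.ext (SimpleGraph.ConnectedComponent.sound r)
      · exact absurd (SimpleGraph.ConnectedComponent.sound r2.symm) hz
      · exact absurd (SimpleGraph.ConnectedComponent.sound r1) hy
    · intro c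
      induction c using SimpleGraph.ConnectedComponent.ind with | _ u =>
      by_cases hub : H'.Reachable u b
      · have hnab : ¬ H'.Reachable a b := hnr
        refine ⟨⟨H'.connectedComponentMk a, fun hEq => hnab (SimpleGraph.ConnectedComponent.exact hEq)⟩, ?_⟩
        simp only [φmk]
        exact SimpleGraph.ConnectedComponent.sound (hRab.trans ((hub.mono hle).symm))
      · refine ⟨⟨H'.connectedComponentMk u, fun hEq => hub (SimpleGraph.ConnectedComponent.exact hEq)⟩, rfl⟩
  haveI : Finite H'.ConnectedComponent := Quot.finite _
  haveI : Fintype H'.ConnectedComponent := Fintype.ofFinite _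
  have hcard : Nat.card {y : H'.ConnectedComponent // y ≠ b₀} = Nat.card H.ConnectedComponent :=
    Nat.card_congr (Equiv.ofBijective _ hbij)
  have h1 : Nat.card {y : H'.ConnectedComponent // y ≠ b₀}
      = Nat.card H'.ConnectedComponent - 1 := by
    rw [Nat.card_eq_fintype_card, Nat.card_eq_fintype_card]
    have := Fintype.card_subtype_compl (fun y : H'.ConnectedComponent => y = b₀)
    simpa [Fintype.card_subtype_eq] using this
  have h2 : 1 ≤ Nat.card H'.ConnectedComponent := by
    rw [Nat.card_eq_fintype_card]
    exact Fintype.card_pos_iff.mpr ⟨b₀⟩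
  omega

lemma fromEdgeSet_erase_eq (S : Finset (Sym2 V)) (e : Sym2 V) :
    SimpleGraph.fromEdgeSet (↑(S.erase e) : Set (Sym2 V))
      = SimpleGraph.fromEdgeSet (↑S : Set (Sym2 V)) \ SimpleGraph.fromEdgeSet {e} := by
  ext x y
  rw [fromEdgeSet_adj, sdiff_adj, fromEdgeSet_adj, fromEdgeSet_adj]
  constructor
  · rintro ⟨hmem, hne⟩
    have hm := Finset.mem_erase.mp (by exact_mod_cast hmem)
    exact ⟨⟨by exact_mod_cast hm.2, hne⟩, fun h => hm.1 (by simpa using h.1)⟩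
  · rintro ⟨⟨hmem, hne⟩, hnot⟩
    refine ⟨?_, hne⟩
    have hxe : s(x, y) ≠ e := fun h => hnot ⟨by simpa using h, hne⟩
    exact Finset.mem_coe.mpr (Finset.mem_erase.mpr ⟨hxe, by exact_mod_cast hmem⟩)

lemma isAcyclic_mono {H K : SimpleGraph V} (h : H ≤ K) (hK : K.IsAcyclic) : H.IsAcyclic := by
  intro v c hc
  have hsub : ∀ e ∈ c.edges, e ∈ K.edgeSet := by
    intro e he
    exact SimpleGraph.edgeSet_mono h (c.edges_subset_edgeSet he)
  exact hK (c.transfer K hsub) (hc.transfer hsub)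

/-- The forest formula: an acyclic spanning subgraph with `k` edges has `|V| - k` components. -/
lemma forest_card : ∀ (n : ℕ) (S : Finset (Sym2 V)), S.card = n →
    (∀ e ∈ S, ¬ e.IsDiag) →
    (SimpleGraph.fromEdgeSet (↑S : Set (Sym2 V))).IsAcyclic →
    Nat.card (SimpleGraph.fromEdgeSet (↑S : Set (Sym2 V))).ConnectedComponent + S.card
      = Fintype.card V := by
  intro n
  induction n with
  | zero =>
    intro S hcard _ _
    rw [Finset.card_eq_zero.mp hcard] at *
    simp only [Finset.coe_empty, fromEdgeSet_empty, Finset.card_empty, add_zero]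
    exact card_cc_bot
  | succ n ih =>
    intro S hcard hd hac
    have hne : S.Nonempty := Finset.card_pos.mp (by omega)
    obtain ⟨e, he⟩ := hne
    obtain ⟨a, b, rfl⟩ : ∃ a b : V, e = s(a, b) := by
      induction e using Sym2.ind with | _ a b => exact ⟨a, b, rfl⟩
    have hab : a ≠ b := fun h => hd _ he (by simp [h])
    have hadj : (SimpleGraph.fromEdgeSet (↑S : Set (Sym2 V))).Adj a b :=
      (fromEdgeSet_adj _).mpr ⟨by exact_mod_cast he, hab⟩
    have hnr : ¬ (SimpleGraph.fromEdgeSet (↑S : Set (Sym2 V))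
        \ SimpleGraph.fromEdgeSet {s(a, b)}).Reachable a b := by
      intro hr
      obtain ⟨u, p, hp, -⟩ :=
        (SimpleGraph.adj_and_reachable_delete_edges_iff_exists_cycle).mp ⟨hadj, hr⟩
      exact hac p hp
    have hdel := card_cc_delete hadj hnr
    have herase := ih (S.erase s(a, b)) (by rw [Finset.card_erase_of_mem he]; omega)
      (fun f hf => hd f (Finset.erase_subset _ _ hf))
      (by
        rw [fromEdgeSet_erase_eq]
        exact isAcyclic_mono sdiff_le hac)
    rw [fromEdgeSet_erase_eq, hdel, Finset.card_erase_of_mem he] at herase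
    omega


/-- `e` is the top edge of a circuit whose associated broken circuit lies in `S`. -/
def Bad (G : SimpleGraph V) (ord : Sym2 V → ℕ) (S : Finset (Sym2 V)) (e : Sym2 V) : Prop :=
  ∃ C, IsCircuit G C ∧ e ∈ C ∧ (∀ f ∈ C, ord f ≤ ord e) ∧ C.erase e ⊆ S

lemma Bad.mem_edgeSet {G : SimpleGraph V} {ord S e} (h : Bad G ord S e) : e ∈ G.edgeSet := by
  obtain ⟨C, ⟨v, w, hw, rfl⟩, heC, -, -⟩ := h
  exact w.edges_subset_edgeSet (List.mem_toFinset.mp heC)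

lemma not_isBCF_iff {G : SimpleGraph V} {ord : Sym2 V → ℕ} {S : Finset (Sym2 V)}
    (hS : S ⊆ G.edgeFinset) : ¬ IsBCF G ord S ↔ ∃ e, Bad G ord S e := by
  constructor
  · intro h
    rw [IsBCF, not_and] at h
    push_neg at h
    obtain ⟨B, ⟨C, hC, e, heC, hmax, rfl⟩, hBS⟩ := h hS
    exact ⟨e, C, hC, heC, hmax, hBS⟩
  · rintro ⟨e, C, hC, heC, hmax, hsub⟩ ⟨-, h2⟩
    exact h2 (C.erase e) ⟨C, hC, e, heC, hmax, rfl⟩ hsub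

def IsMinBad (G : SimpleGraph V) (ord : Sym2 V → ℕ) (S : Finset (Sym2 V)) (e : Sym2 V) : Prop :=
  Bad G ord S e ∧ ∀ f, Bad G ord S f → ord e ≤ ord f

lemma isMinBad_unique {G : SimpleGraph V} {ord : Sym2 V → ℕ} (hinj : Set.InjOn ord G.edgeSet)
    {S e e'} (h : IsMinBad G ord S e) (h' : IsMinBad G ord S e') : e = e' :=
  hinj h.1.mem_edgeSet h'.1.mem_edgeSet
    (le_antisymm (h.2 e' h'.1) (h'.2 e h.1))

lemma exists_isMinBad {G : SimpleGraph V} {ord : Sym2 V → ℕ} {S : Finset (Sym2 V)}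
    (h : ∃ e, Bad G ord S e) : ∃ e, IsMinBad G ord S e := by
  classical
  obtain ⟨e₁, he₁⟩ := h
  have hne : (G.edgeFinset.filter (Bad G ord S)).Nonempty :=
    ⟨e₁, Finset.mem_filter.mpr ⟨SimpleGraph.mem_edgeFinset.mpr he₁.mem_edgeSet, he₁⟩⟩
  obtain ⟨e, heMem, hmin⟩ := Finset.exists_min_image _ ord hne
  refine ⟨e, (Finset.mem_filter.mp heMem).2, ?_⟩
  intro f hf
  exact hmin f (Finset.mem_filter.mpr ⟨SimpleGraph.mem_edgeFinset.mpr hf.mem_edgeSet, hf⟩)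

/-- toggle an edge -/
def tog (S : Finset (Sym2 V)) (e : Sym2 V) : Finset (Sym2 V) :=
  if e ∈ S then S.erase e else insert e S

lemma tog_tog (S : Finset (Sym2 V)) (e : Sym2 V) : tog (tog S e) e = S := by
  by_cases h : e ∈ S
  · rw [tog, tog]
    rw [if_pos h, if_neg (Finset.notMem_erase e S), Finset.insert_erase h]
  · rw [tog, tog]
    rw [if_neg h, if_pos (Finset.mem_insert_self e S), Finset.erase_insert h]

lemma tog_ne (S : Finset (Sym2 V)) (e : Sym2 V) : tog S e ≠ S := by
  by_cases h : e ∈ S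
  · rw [tog, if_pos h]
    intro hEq
    exact Finset.notMem_erase e S (by rw [hEq]; exact h)
  · rw [tog, if_neg h]
    intro hEq
    exact h (by rw [← hEq]; exact Finset.mem_insert_self e S)

lemma isMinBad_tog {G : SimpleGraph V} {ord : Sym2 V → ℕ} {S : Finset (Sym2 V)} {e₀ : Sym2 V}
    (h : IsMinBad G ord S e₀) : IsMinBad G ord (tog S e₀) e₀ := by
  obtain ⟨⟨C, hC, heC, hmax, hsub⟩, hmin⟩ := h
  by_cases hmem : e₀ ∈ S
  · rw [tog, if_pos hmem]
    constructor
    · refine ⟨C, hC, heC, hmax, ?_⟩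
      intro f hf
      exact Finset.mem_erase.mpr ⟨(Finset.mem_erase.mp hf).1, hsub hf⟩
    · intro f hf
      obtain ⟨C', hC', hfC', hmax', hsub'⟩ := hf
      exact hmin f ⟨C', hC', hfC', hmax', hsub'.trans (Finset.erase_subset _ _)⟩
  · rw [tog, if_neg hmem]
    constructor
    · exact ⟨C, hC, heC, hmax, hsub.trans (Finset.subset_insert _ _)⟩
    · intro f hf
      obtain ⟨C', hC', hfC', hmax', hsub'⟩ := hf
      by_cases he₀C' : e₀ ∈ C'
      · exact hmax' e₀ he₀C'
      · refine hmin f ⟨C', hC', hfC', hmax', ?_⟩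
        intro g hg
        rcases Finset.mem_insert.mp (hsub' hg) with rfl | hgS
        · exact absurd ((Finset.mem_erase.mp hg).2) he₀C'
        · exact hgS

lemma tog_subset {G : SimpleGraph V} {ord : Sym2 V → ℕ} {S : Finset (Sym2 V)} {e₀ : Sym2 V}
    (hS : S ⊆ G.edgeFinset) (h : Bad G ord S e₀) : tog S e₀ ⊆ G.edgeFinset := by
  by_cases hmem : e₀ ∈ S
  · rw [tog, if_pos hmem]; exact (Finset.erase_subset _ _).trans hS
  · rw [tog, if_neg hmem]
    exact Finset.insert_subset (SimpleGraph.mem_edgeFinset.mpr h.mem_edgeSet) hS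

lemma tog_not_isBCF {G : SimpleGraph V} {ord : Sym2 V → ℕ} {S : Finset (Sym2 V)} {e₀ : Sym2 V}
    (hS : S ⊆ G.edgeFinset) (h : IsMinBad G ord S e₀) : ¬ IsBCF G ord (tog S e₀) :=
  (not_isBCF_iff (tog_subset hS h.1)).mpr ⟨e₀, (isMinBad_tog h).1⟩

lemma card_cc_tog {G : SimpleGraph V} {ord : Sym2 V → ℕ} {S : Finset (Sym2 V)} {e₀ : Sym2 V}
    (h : Bad G ord S e₀) :
    Nat.card (SimpleGraph.fromEdgeSet (↑(tog S e₀) : Set (Sym2 V))).ConnectedComponent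
      = Nat.card (SimpleGraph.fromEdgeSet (↑S : Set (Sym2 V))).ConnectedComponent := by
  obtain ⟨C, ⟨v, w, hw, rfl⟩, heC, hmax, hsub⟩ := h
  have heW : e₀ ∈ w.edges := List.mem_toFinset.mp heC
  by_cases hmem : e₀ ∈ S
  · rw [tog, if_pos hmem]
    have hins : insert e₀ (S.erase e₀) = S := Finset.insert_erase hmem
    conv_rhs => rw [← hins]
    exact (card_cc_insert w hw heW (S.erase e₀)
      (fun f hf => Finset.mem_erase.mpr ⟨(Finset.mem_erase.mp hf).1, hsub hf⟩)).symm
  · rw [tog, if_neg hmem]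
    exact card_cc_insert w hw heW S hsub

lemma isBCF_acyclic {G : SimpleGraph V} {ord : Sym2 V → ℕ} {S : Finset (Sym2 V)}
    (h : IsBCF G ord S) : (SimpleGraph.fromEdgeSet (↑S : Set (Sym2 V))).IsAcyclic := by
  intro v c hc
  have hsub : ∀ e ∈ c.edges, e ∈ G.edgeSet := by
    intro e he
    have := c.edges_subset_edgeSet he
    rw [edgeSet_fromEdgeSet] at this
    exact SimpleGraph.mem_edgeFinset.mp (h.1 (by exact_mod_cast this.1))
  set c' := c.transfer G hsub with hc'
  have hcyc : c'.IsCycle := hc.transfer hsub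
  have hedges : c'.edges = c.edges := Walk.edges_transfer c hsub
  have hCS : c'.edges.toFinset ⊆ S := by
    intro f hf
    have hf' := List.mem_toFinset.mp hf
    rw [hedges] at hf'
    have := c.edges_subset_edgeSet hf'
    rw [edgeSet_fromEdgeSet] at this
    exact_mod_cast this.1
  have hne : c'.edges.toFinset.Nonempty := by
    have h3 := hcyc.three_le_length
    have : c'.edges ≠ [] := by
      intro hnil
      have := c'.length_edges
      rw [hnil] at this
      simp at this
      omega
    obtain ⟨f, hf⟩ := List.exists_mem_of_ne_nil _ this
    exact ⟨f, List.mem_toFinset.mpr hf⟩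
  obtain ⟨e, heMem, hmax⟩ := Finset.exists_max_image c'.edges.toFinset ord hne
  exact h.2 (c'.edges.toFinset.erase e)
    ⟨c'.edges.toFinset, ⟨v, c', hcyc, rfl⟩, e, heMem, hmax, rfl⟩
    ((Finset.erase_subset _ _).trans hCS)

lemma sign_cancel {G : SimpleGraph V} {ord : Sym2 V → ℕ} {S : Finset (Sym2 V)} {e₀ : Sym2 V}
    (hbad : Bad G ord S e₀) (x : ℝ) (n : ℕ) :
    (-1 : ℝ) ^ S.card
      * (-x) ^ (n - Nat.card (SimpleGraph.fromEdgeSet (↑S : Set (Sym2 V))).ConnectedComponent)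
    + (-1 : ℝ) ^ (tog S e₀).card
      * (-x) ^ (n - Nat.card
          (SimpleGraph.fromEdgeSet (↑(tog S e₀) : Set (Sym2 V))).ConnectedComponent) = 0 := by
  have hcc := card_cc_tog hbad
  by_cases hmem : e₀ ∈ S
  · rw [tog, if_pos hmem] at hcc ⊢
    rw [hcc, ← Finset.card_erase_add_one hmem, pow_succ]
    ring
  · rw [tog, if_neg hmem] at hcc ⊢
    rw [hcc, Finset.card_insert_of_notMem hmem, pow_succ]
    ring

lemma tog_invol {G : SimpleGraph V} {ord : Sym2 V → ℕ} (hinj : Set.InjOn ord G.edgeSet)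
    {S : Finset (Sym2 V)} {e₀ e₁ : Sym2 V} (he₀ : IsMinBad G ord S e₀)
    (he₁ : IsMinBad G ord (tog S e₀) e₁) : tog (tog S e₀) e₁ = S := by
  have h : e₁ = e₀ := isMinBad_unique hinj he₁ (isMinBad_tog he₀)
  rw [h, tog_tog]

theorem key_identity (G : SimpleGraph V) (ord : Sym2 V → ℕ) (hinj : Set.InjOn ord G.edgeSet)
    (x : ℝ) :
    bcfSum G ord x = ∑ S ∈ G.edgeFinset.powerset, (-1 : ℝ) ^ S.card
      * (-x) ^ (Fintype.card V
        - Nat.card (SimpleGraph.fromEdgeSet (↑S : Set (Sym2 V))).ConnectedComponent) := by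
  classical
  set n := Fintype.card V with hn
  set f : Finset (Sym2 V) → ℝ := fun S => (-1 : ℝ) ^ S.card
    * (-x) ^ (n - Nat.card (SimpleGraph.fromEdgeSet (↑S : Set (Sym2 V))).ConnectedComponent)
    with hfdef
  have hzero : ∑ S ∈ G.edgeFinset.powerset.filter (fun S => ¬ IsBCF G ord S), f S = 0 := by
    refine Finset.sum_involution
      (fun S hS => tog S (exists_isMinBad ((not_isBCF_iff
        (Finset.mem_powerset.mp (Finset.mem_filter.mp hS).1)).mp
        (Finset.mem_filter.mp hS).2)).choose)
      ?_ ?_ ?_ ?_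
    · -- f S + f (tog S e₀) = 0
      intro S hS
      have hmin : IsMinBad G ord S _ := (exists_isMinBad ((not_isBCF_iff
        (Finset.mem_powerset.mp (Finset.mem_filter.mp hS).1)).mp
        (Finset.mem_filter.mp hS).2)).choose_spec
      simp only [hfdef]
      exact sign_cancel hmin.1 x n
    · intro S hS _
      exact tog_ne S _
    · intro S hS
      have hsub := Finset.mem_powerset.mp (Finset.mem_filter.mp hS).1
      have hmin : IsMinBad G ord S _ := (exists_isMinBad ((not_isBCF_iff hsub).mp
        (Finset.mem_filter.mp hS).2)).choose_spec
      exact Finset.mem_filter.mpr ⟨Finset.mem_powerset.mpr (tog_subset hsub hmin.1),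
        tog_not_isBCF hsub hmin⟩
    · intro S hS
      have hsub := Finset.mem_powerset.mp (Finset.mem_filter.mp hS).1
      have hnb := (Finset.mem_filter.mp hS).2
      have hminS : IsMinBad G ord S _ :=
        (exists_isMinBad ((not_isBCF_iff hsub).mp hnb)).choose_spec
      have hminT : IsMinBad G ord (tog S _) _ :=
        (exists_isMinBad ((not_isBCF_iff (tog_subset hsub hminS.1)).mp
          (tog_not_isBCF hsub hminS))).choose_spec
      exact tog_invol hinj hminS hminT
  have hbcf : ∀ S ∈ G.edgeFinset.powerset.filter (IsBCF G ord), f S = x ^ S.card := by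
    intro S hS
    obtain ⟨hpow, hb⟩ := Finset.mem_filter.mp hS
    have hsub := Finset.mem_powerset.mp hpow
    have hdiag : ∀ e ∈ S, ¬ e.IsDiag := fun e he =>
      G.not_isDiag_of_mem_edgeSet (SimpleGraph.mem_edgeFinset.mp (hsub he))
    have hforest := forest_card S.card S rfl hdiag (isBCF_acyclic hb)
    have hcc : n - Nat.card (SimpleGraph.fromEdgeSet
        (↑S : Set (Sym2 V))).ConnectedComponent = S.card := by omega
    simp only [hfdef, hcc]
    rw [← mul_pow, neg_one_mul, neg_neg]
  calc bcfSum G ord x = ∑ S ∈ G.edgeFinset.powerset.filter (IsBCF G ord), f S := by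
        rw [bcfSum]
        exact (Finset.sum_congr rfl hbcf).symm
    _ = ∑ S ∈ G.edgeFinset.powerset.filter (IsBCF G ord), f S
        + ∑ S ∈ G.edgeFinset.powerset.filter (fun S => ¬ IsBCF G ord S), f S := by
        rw [hzero, add_zero]
    _ = ∑ S ∈ G.edgeFinset.powerset, f S :=
        Finset.sum_filter_add_sum_filter_not _ _ f


/-- The polynomial `F_G` does not depend on the linear ordering of the edges used to
define broken circuits. -/
theorem bcfSum_order_independent (G : SimpleGraph V) (ord₁ ord₂ : Sym2 V → ℕ)
    (h₁ : Set.InjOn ord₁ G.edgeSet) (h₂ : Set.InjOn ord₂ G.edgeSet) (x : ℝ) :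
    bcfSum G ord₁ x = bcfSum G ord₂ x := by
  rw [key_identity G ord₁ h₁ x, key_identity G ord₂ h₂ x]
end

section
/- Let G = (V,E) be a finite simple graph with an edge ordering, let e be the smallest edge in the ordering, and let 𝓕_{G,e} denote the set of broken-circuit-free sets of G containing e. Then the map F ↦ F ∖ {e} is a bijection from 𝓕_{G,e} to the set of broken-circuit-free sets of the simple graph G/e obtained by contracting e and, among resulting parallel edges, keeping only the largest one (with the induced edge ordering). -/
open Finset

attribute [local instance] Classical.propDecidable
set_option linter.unusedSectionVars false
set_option maxHeartbeats 1000000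

variable {V : Type} [Fintype V] [DecidableEq V]

/-- The simple graph `G/e` obtained from `G` by contracting the edge `e = uv`,
i.e. mapping `v` to `u` (multiple edges are merged, loops discarded). -/
def contractEdge (G : SimpleGraph V) (u v : V) : SimpleGraph V where
  Adj a b := a ≠ b ∧ ∃ x y, G.Adj x y ∧
    (if x = v then u else x) = a ∧ (if y = v then u else y) = b
  symm := by
    constructor
    rintro a b ⟨hab, x, y, hxy, hx, hy⟩
    exact ⟨hab.symm, y, x, hxy.symm, hy, hx⟩
  loopless := ⟨fun a h => h.1 rfl⟩

/-- The edge ordering induced on `G/e`: an edge of `G/e` receives the order value of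
the largest edge of `G` mapping onto it (so among parallel edges only the largest is
kept, with its original position in the ordering). -/
noncomputable def contractOrd (G : SimpleGraph V) (u v : V) (ord : Sym2 V → ℕ) :
    Sym2 V → ℕ :=
  fun f => (G.edgeFinset.filter
    (fun g => g.map (fun w => if w = v then u else w) = f)).sup ord

/-- abbreviation for the contraction map on vertices -/
private def cvm (u v : V) : V → V := fun w => if w = v then u else w

private def cmap (u v : V) : Sym2 V → Sym2 V := Sym2.map (cvm u v)

@[simp] private lemma cvm_v (u v : V) : cvm u v v = u := by simp [cvm]
@[simp] private lemma cvm_ne (u : V) {v x : V} (h : x ≠ v) : cvm u v x = x := by simp [cvm, h]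

private lemma cmap_pair (u v x y : V) : cmap u v s(x, y) = s(cvm u v x, cvm u v y) :=
  Sym2.map_pair_eq _ _ _

section basics
variable {G : SimpleGraph V} {u v : V}

private lemma adj_up {x y : V} (h : G.Adj x y) (hne : cvm u v x ≠ cvm u v y) :
    (contractEdge G u v).Adj (cvm u v x) (cvm u v y) :=
  ⟨hne, x, y, h, rfl, rfl⟩

private lemma adj_down {a b : V} (h : (contractEdge G u v).Adj a b) :
    ∃ x y, G.Adj x y ∧ cvm u v x = a ∧ cvm u v y = b := h.2

private lemma cvm_ne_v (hne : u ≠ v) (x : V) : cvm u v x ≠ v := by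
  by_cases h : x = v <;> simp [cvm, h, hne]

private lemma adj_ne_v {a b : V} (hne : u ≠ v) (h : (contractEdge G u v).Adj a b) :
    a ≠ v := by
  obtain ⟨x, y, hxy, hx, hy⟩ := adj_down h
  subst hx
  exact cvm_ne_v hne x

private lemma adj_down_ne {a b : V} (hne : u ≠ v) (h : (contractEdge G u v).Adj a b)
    (ha : a ≠ u) (hb : b ≠ u) : G.Adj a b := by
  obtain ⟨x, y, hxy, hx, hy⟩ := adj_down h
  have hav := adj_ne_v hne h
  have hbv := adj_ne_v hne h.symm
  have hxv : x ≠ v := by rintro rfl; simp [cvm] at hx; exact ha hx.symm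
  have hyv : y ≠ v := by rintro rfl; simp [cvm] at hy; exact hb hy.symm
  rw [cvm_ne u hxv] at hx; rw [cvm_ne u hyv] at hy
  subst hx; subst hy; exact hxy

private lemma adj_down_u {b : V} (hne : u ≠ v) (h : (contractEdge G u v).Adj u b) :
    G.Adj u b ∨ G.Adj v b := by
  obtain ⟨x, y, hxy, hx, hy⟩ := adj_down h
  have hbv := adj_ne_v hne h.symm
  have hyv : y ≠ v := by rintro rfl; simp [cvm] at hy; exact h.1 hy
  rw [cvm_ne u hyv] at hy
  subst hy
  by_cases hxv : x = v
  · subst hxv; right; exact hxy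
  · rw [cvm_ne u hxv] at hx; subst hx; left; exact hxy

private lemma cmap_fix {f : Sym2 V} (hv : v ∉ f) : cmap u v f = f := by
  induction f with
  | _ x y =>
    rw [Sym2.mem_iff] at hv
    push_neg at hv
    rw [cmap_pair, cvm_ne u (Ne.symm hv.1), cvm_ne u (Ne.symm hv.2)]

private lemma edge_up (hne : u ≠ v) {f : Sym2 V} (hf : f ∈ G.edgeSet) (hfe : f ≠ s(u, v)) :
    cmap u v f ∈ (contractEdge G u v).edgeSet := by
  induction f with
  | _ x y =>
    rw [SimpleGraph.mem_edgeSet] at hf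
    rw [cmap_pair, SimpleGraph.mem_edgeSet]
    refine adj_up hf ?_
    intro h
    by_cases hx : x = v <;> by_cases hy : y = v <;> simp [cvm, hx, hy] at h
    · exact hf.ne (hx.trans hy.symm)
    · subst hx; subst h; exact hfe (Sym2.eq_swap)
    · subst hy; subst h; exact hfe rfl
    · exact hf.ne h

private lemma cmap_cases (hne : u ≠ v) {f : Sym2 V} (hf : f ∈ G.edgeSet) (hfe : f ≠ s(u, v)) :
    (v ∉ f ∧ cmap u v f = f) ∨
      ∃ w, w ≠ u ∧ w ≠ v ∧ f = s(w, v) ∧ cmap u v f = s(w, u) := by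
  induction f with
  | _ x y =>
    rw [SimpleGraph.mem_edgeSet] at hf
    by_cases hx : x = v
    · subst hx
      right
      refine ⟨y, ?_, Ne.symm hf.ne, Sym2.eq_swap, ?_⟩
      · rintro rfl; exact hfe Sym2.eq_swap
      · rw [cmap_pair, cvm_v, cvm_ne u (Ne.symm hf.ne)]; exact Sym2.eq_swap
    · by_cases hy : y = v
      · subst hy
        right
        refine ⟨x, ?_, hx, rfl, ?_⟩
        · rintro rfl; exact hfe rfl
        · rw [cmap_pair, cvm_v, cvm_ne u hx]
      · left
        constructor
        · rw [Sym2.mem_iff]; push_neg; exact ⟨Ne.symm hx, Ne.symm hy⟩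
        · rw [cmap_pair, cvm_ne u hx, cvm_ne u hy]

private lemma preim_not_u (hne : u ≠ v) {g f : Sym2 V} (hg : g ∈ G.edgeSet)
    (h : cmap u v g = f) (hu : u ∉ f) : g = f := by
  have hge : g ≠ s(u, v) := by
    rintro rfl
    rw [cmap_pair, cvm_v, cvm_ne u hne] at h
    subst h
    exact hu (by simp)
  rcases cmap_cases hne hg hge with ⟨_, hfix⟩ | ⟨w, hwu, hwv, rfl, hmv⟩
  · rw [← hfix, h]
  · rw [hmv] at h
    subst h
    exact absurd (by simp) hu

private lemma preim_u (hne : u ≠ v) {g : Sym2 V} {a : V} (hg : g ∈ G.edgeSet)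
    (hau : a ≠ u) (hav : a ≠ v) (h : cmap u v g = s(u, a)) :
    g = s(u, a) ∨ g = s(v, a) := by
  have hge : g ≠ s(u, v) := by
    rintro rfl
    rw [cmap_pair, cvm_v, cvm_ne u hne] at h
    rw [Sym2.eq_iff] at h
    rcases h with ⟨_, h⟩ | ⟨h, _⟩ <;> exact hau h.symm
  rcases cmap_cases hne hg hge with ⟨_, hfix⟩ | ⟨w, hwu, hwv, rfl, hmv⟩
  · left; rw [← hfix, h]
  · rw [hmv, Sym2.eq_iff] at h
    rcases h with ⟨hwu', _⟩ | ⟨hwa, hua⟩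
    · exact absurd hwu' hwu
    · right; rw [hwa]; exact Sym2.eq_swap

private lemma co_ge (ord : Sym2 V → ℕ) {g f : Sym2 V} (hg : g ∈ G.edgeFinset)
    (h : cmap u v g = f) : ord g ≤ contractOrd G u v ord f :=
  Finset.le_sup (Finset.mem_filter.2 ⟨hg, h⟩)

private lemma co_attained (ord : Sym2 V → ℕ) {f : Sym2 V}
    (hf : f ∈ (contractEdge G u v).edgeSet) :
    ∃ g ∈ G.edgeFinset, cmap u v g = f ∧ ord g = contractOrd G u v ord f := by
  have hne : (G.edgeFinset.filter
      (fun g => g.map (fun w => if w = v then u else w) = f)).Nonempty := by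
    induction f with
    | _ a b =>
      rw [SimpleGraph.mem_edgeSet] at hf
      obtain ⟨x, y, hxy, hx, hy⟩ := adj_down hf
      exact ⟨s(x, y), Finset.mem_filter.2 ⟨SimpleGraph.mem_edgeFinset.2 hxy,
        by rw [show (fun w => if w = v then u else w) = cvm u v from rfl,
          show Sym2.map (cvm u v) s(x,y) = s(cvm u v x, cvm u v y) from Sym2.map_pair_eq _ _ _,
          hx, hy]⟩⟩
  obtain ⟨g, hg, hgs⟩ := Finset.exists_mem_eq_sup _ hne ord
  rw [Finset.mem_filter] at hg
  exact ⟨g, hg.1, hg.2, hgs.symm⟩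

private lemma co_self (hne : u ≠ v) (ord : Sym2 V → ℕ) {f : Sym2 V}
    (hf : f ∈ (contractEdge G u v).edgeSet) (hu : u ∉ f) :
    contractOrd G u v ord f = ord f ∧ f ∈ G.edgeFinset := by
  have hfG : f ∈ G.edgeSet := by
    induction f with
    | _ a b =>
      rw [SimpleGraph.mem_edgeSet] at hf ⊢
      rw [Sym2.mem_iff] at hu
      push_neg at hu
      exact adj_down_ne hne hf (Ne.symm hu.1) (Ne.symm hu.2)
  refine ⟨?_, SimpleGraph.mem_edgeFinset.2 hfG⟩
  have hv : v ∉ f := by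
    induction f with
    | _ a b =>
      rw [SimpleGraph.mem_edgeSet] at hf
      rw [Sym2.mem_iff]
      push_neg
      exact ⟨Ne.symm (adj_ne_v hne hf), Ne.symm (adj_ne_v hne hf.symm)⟩
  have : G.edgeFinset.filter
      (fun g => g.map (fun w => if w = v then u else w) = f) = {f} := by
    ext g
    rw [Finset.mem_filter, Finset.mem_singleton]
    constructor
    · rintro ⟨hg, hgf⟩
      exact preim_not_u hne (SimpleGraph.mem_edgeFinset.1 hg) hgf hu
    · rintro rfl
      exact ⟨SimpleGraph.mem_edgeFinset.2 hfG, cmap_fix hv⟩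
  rw [contractOrd, this, Finset.sup_singleton]

private lemma vsupport (hne : u ≠ v) {a c : V} (q : (contractEdge G u v).Walk a c)
    (ha : a ≠ v) : ∀ x ∈ q.support, x ≠ v := by
  induction q with
  | nil => intro x hx; rw [SimpleGraph.Walk.mem_support_nil_iff] at hx; subst hx; exact ha
  | cons h p ih =>
    intro x hx
    rw [SimpleGraph.Walk.support_cons, List.mem_cons] at hx
    rcases hx with rfl | hx
    · exact ha
    · exact ih (adj_ne_v hne h.symm) x hx

private lemma walk_down (hne : u ≠ v) {a c : V} (q : (contractEdge G u v).Walk a c)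
    (hu : ∀ x ∈ q.support, x ≠ u) (ha : a ≠ v) :
    ∃ qG : G.Walk a c, qG.support = q.support ∧ qG.edges = q.edges := by
  have hv := vsupport hne q ha
  have hE : ∀ f ∈ q.edges, f ∈ G.edgeSet := by
    intro f hf
    induction f with
    | _ x y =>
      have hx := SimpleGraph.Walk.fst_mem_support_of_mem_edges q hf
      have hy := SimpleGraph.Walk.snd_mem_support_of_mem_edges q hf
      have := q.edges_subset_edgeSet hf
      rw [SimpleGraph.mem_edgeSet] at this ⊢
      exact adj_down_ne hne this (hu x hx) (hu y hy)
  exact ⟨q.transfer G hE, q.support_transfer hE, q.edges_transfer hE⟩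

private lemma walk_up (hne : u ≠ v) {a c : V} (q : G.Walk a c)
    (hv : ∀ x ∈ q.support, x ≠ v) :
    ∃ qC : (contractEdge G u v).Walk a c, qC.support = q.support ∧ qC.edges = q.edges := by
  have hE : ∀ f ∈ q.edges, f ∈ (contractEdge G u v).edgeSet := by
    intro f hf
    induction f with
    | _ x y =>
      have hx := hv x (SimpleGraph.Walk.fst_mem_support_of_mem_edges q hf)
      have hy := hv y (SimpleGraph.Walk.snd_mem_support_of_mem_edges q hf)
      have := q.edges_subset_edgeSet hf
      rw [SimpleGraph.mem_edgeSet] at this ⊢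
      have h2 := adj_up (u := u) (v := v) this (by rw [cvm_ne u hx, cvm_ne u hy]; exact this.ne)
      rwa [cvm_ne u hx, cvm_ne u hy] at h2
  exact ⟨q.transfer _ hE, q.support_transfer hE, q.edges_transfer hE⟩

private lemma cycle_decomp {s : V} (w : G.Walk s s) (hw : w.IsCycle) :
    ∃ (a c : V) (h₁ : G.Adj s a) (q : G.Walk a c) (h₂ : G.Adj c s),
      w = SimpleGraph.Walk.cons h₁ (q.concat h₂) ∧ q.IsPath ∧
        (∀ x ∈ q.support, x ≠ s) ∧ a ≠ c := by
  cases w with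
  | nil => exact absurd rfl hw.ne_nil
  | @cons _ a _ h p =>
    rw [SimpleGraph.Walk.cons_isCycle_iff] at hw
    obtain ⟨c, h₂', r, hr⟩ := SimpleGraph.Walk.exists_eq_cons_of_ne h.ne p.reverse
    have hp : p = r.reverse.concat h₂'.symm := by
      have := congrArg SimpleGraph.Walk.reverse hr
      rw [SimpleGraph.Walk.reverse_reverse, SimpleGraph.Walk.reverse_cons] at this
      exact this
    refine ⟨a, c, h, r.reverse, h₂'.symm, by rw [hp], ?_, ?_, ?_⟩
    · have := hw.1
      rw [hp, SimpleGraph.Walk.isPath_def, SimpleGraph.Walk.support_concat,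
        List.nodup_append] at this
      rw [SimpleGraph.Walk.isPath_def]
      exact this.1
    · have := hw.1
      rw [hp, SimpleGraph.Walk.isPath_def, SimpleGraph.Walk.support_concat,
        List.nodup_append] at this
      intro x hx rfl
      exact this.2.2 _ hx _ (List.mem_singleton.2 rfl) rfl
    · intro hac
      apply hw.2
      rw [hp, SimpleGraph.Walk.edges_concat, List.concat_eq_append, List.mem_append]
      right
      rw [List.mem_singleton, hac, Sym2.eq_swap]

private lemma cyc1 {s a c : V} (h₁ : G.Adj s a) (q : G.Walk a c) (h₂ : G.Adj c s)
    (hq : q.IsPath) (hs : ∀ x ∈ q.support, x ≠ s) (hac : a ≠ c) :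
    (SimpleGraph.Walk.cons h₁ (q.concat h₂)).IsCycle ∧
    (SimpleGraph.Walk.cons h₁ (q.concat h₂)).edges = s(s, a) :: (q.edges ++ [s(c, s)]) := by
  constructor
  · rw [SimpleGraph.Walk.cons_isCycle_iff]
    constructor
    · rw [SimpleGraph.Walk.isPath_def, SimpleGraph.Walk.support_concat,
        List.nodup_append]
      refine ⟨hq.support_nodup, by simp, ?_⟩
      intro x hx y hx2 hxy
      rcases List.mem_singleton.1 hx2 with rfl
      exact hs x hx hxy
    · rw [SimpleGraph.Walk.edges_concat, List.concat_eq_append, List.mem_append,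
        List.mem_singleton]
      rintro (hmem | heq)
      · exact hs s (SimpleGraph.Walk.fst_mem_support_of_mem_edges q hmem) rfl
      · rw [Sym2.eq_iff] at heq
        rcases heq with ⟨rfl, rfl⟩ | ⟨_, hac'⟩
        · exact h₂.ne rfl
        · exact hac hac'
  · rw [SimpleGraph.Walk.edges_cons, SimpleGraph.Walk.edges_concat, List.concat_eq_append]

private lemma cyc2 {s a c t : V} (h₁ : G.Adj s a) (q : G.Walk a c) (h₂ : G.Adj c t)
    (h₃ : G.Adj t s) (hq : q.IsPath) (hs : ∀ x ∈ q.support, x ≠ s)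
    (ht : ∀ x ∈ q.support, x ≠ t) (hac : a ≠ c) (hat : a ≠ t) (hcs : c ≠ s) :
    (SimpleGraph.Walk.cons h₁ ((q.concat h₂).concat h₃)).IsCycle ∧
    (SimpleGraph.Walk.cons h₁ ((q.concat h₂).concat h₃)).edges
      = s(s, a) :: (q.edges ++ [s(c, t), s(t, s)]) := by
  constructor
  · rw [SimpleGraph.Walk.cons_isCycle_iff]
    constructor
    · rw [SimpleGraph.Walk.isPath_def, SimpleGraph.Walk.support_concat,
        SimpleGraph.Walk.support_concat,
        List.append_assoc, List.nodup_append]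
      refine ⟨hq.support_nodup, by simp [h₃.ne], ?_⟩
      intro x hx y hx2 hxy
      rcases List.mem_append.1 hx2 with hx2 | hx2
      · rcases List.mem_singleton.1 hx2 with rfl
        exact ht x hx hxy
      · rcases List.mem_singleton.1 hx2 with rfl
        exact hs x hx hxy
    · rw [SimpleGraph.Walk.edges_concat, SimpleGraph.Walk.edges_concat, List.concat_eq_append,
        List.concat_eq_append, List.append_assoc, List.mem_append]
      rintro (hmem | heq)
      · exact hs s (SimpleGraph.Walk.fst_mem_support_of_mem_edges q hmem) rfl
      · simp only [List.cons_append, List.nil_append, List.mem_cons, List.mem_singleton,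
          List.not_mem_nil, or_false] at heq
        rcases heq with heq | heq <;> rw [Sym2.eq_iff] at heq
        · rcases heq with ⟨rfl, _⟩ | ⟨rfl, _⟩
          · exact hcs rfl
          · exact h₃.ne' rfl
        · rcases heq with ⟨rfl, _⟩ | ⟨_, hat'⟩
          · exact h₃.ne' rfl
          · exact hat hat'
  · rw [SimpleGraph.Walk.edges_cons, SimpleGraph.Walk.edges_concat,
      SimpleGraph.Walk.edges_concat, List.concat_eq_append, List.concat_eq_append,
      List.append_assoc]
    rfl

private lemma tri_circuit (huv : G.Adj u v) {a : V} (hau : a ≠ u) (hav : a ≠ v)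
    (h1 : G.Adj v a) (h2 : G.Adj a u) :
    ∃ w : G.Walk u u, w.IsCycle ∧ w.edges = [s(u, v), s(v, a), s(a, u)] := by
  have hq : (SimpleGraph.Walk.cons h1 SimpleGraph.Walk.nil : G.Walk v a).IsPath := by
    simp [SimpleGraph.Walk.isPath_def, Ne.symm hav]
  have hs : ∀ x ∈ (SimpleGraph.Walk.cons h1 SimpleGraph.Walk.nil : G.Walk v a).support,
      x ≠ u := by
    simp only [SimpleGraph.Walk.support_cons, SimpleGraph.Walk.support_nil]
    intro x hx
    rcases List.mem_cons.1 hx with rfl | hx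
    · exact huv.ne'
    · rcases List.mem_singleton.1 hx with rfl
      exact hau
  obtain ⟨hc, he⟩ := cyc1 huv (SimpleGraph.Walk.cons h1 SimpleGraph.Walk.nil) h2 hq hs
    (Ne.symm hav)
  exact ⟨_, hc, by rw [he]; simp⟩

private lemma cycle_of_eq {G' G'' : SimpleGraph V} {s : V} {w1 : G'.Walk s s}
    {w2 : G''.Walk s s} (h : w1.IsCycle) (hs : w2.support = w1.support)
    (he : w2.edges = w1.edges) : w2.IsCycle := by
  rw [SimpleGraph.Walk.isCycle_def, SimpleGraph.Walk.isTrail_def] at h ⊢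
  refine ⟨he ▸ h.1, ?_, hs ▸ h.2.2⟩
  intro hnil
  apply h.2.1
  have : w1.edges = [] := by rw [← he, hnil, SimpleGraph.Walk.edges_nil]
  have hlen : w1.length = 0 := by rw [← w1.length_edges, this]; rfl
  cases w1 with
  | nil => rfl
  | cons h p => simp at hlen

private lemma mem_edges_of_mem {x : V} {f : Sym2 V} (hx : x ∈ f) {a b : V}
    {p : G.Walk a b} (hf : f ∈ p.edges) : x ∈ p.support := by
  obtain ⟨y, rfl⟩ := Sym2.mem_iff_exists.1 hx
  exact SimpleGraph.Walk.fst_mem_support_of_mem_edges p hf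

private lemma lift_circuit (huv : G.Adj u v) {C' : Finset (Sym2 V)}
    (hC' : IsCircuit (contractEdge G u v) C') (σ : Sym2 V → Sym2 V)
    (hσ : ∀ f' ∈ C', σ f' ∈ G.edgeSet ∧ cmap u v (σ f') = f') :
    ∃ C, IsCircuit G C ∧ C'.image σ ⊆ C ∧ C ⊆ insert s(u, v) (C'.image σ) := by
  have hne : u ≠ v := huv.ne
  obtain ⟨s, w, hw, rfl⟩ := hC'
  by_cases hu : u ∈ w.support
  · -- rotate the cycle to be based at u
    set w₁ := w.rotate u hu with hw₁def
    have hw₁ : w₁.IsCycle := hw.rotate hu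
    have hperm : List.Perm w₁.edges w.edges := (w.rotate_edges u hu).perm
    have hmemC' : ∀ f', f' ∈ w.edges.toFinset ↔ f' ∈ w₁.edges := by
      intro f'; rw [List.mem_toFinset, hperm.mem_iff]
    obtain ⟨a, c, h₁, q, h₂, hdec, hqp, hqs, hac⟩ := cycle_decomp w₁ hw₁
    have hav : a ≠ v := adj_ne_v hne h₁.symm
    have hcv : c ≠ v := adj_ne_v hne h₂
    have hau : a ≠ u := hqs a q.start_mem_support
    have hcu : c ≠ u := hqs c q.end_mem_support
    have hqv : ∀ x ∈ q.support, x ≠ v := vsupport hne q hav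
    have hedges₁ : w₁.edges = s(u, a) :: (q.edges ++ [s(c, u)]) := by
      rw [hdec, SimpleGraph.Walk.edges_cons, SimpleGraph.Walk.edges_concat,
        List.concat_eq_append]
    have hf₁ : s(u, a) ∈ w.edges.toFinset := by
      rw [hmemC', hedges₁]; exact List.mem_cons_self
    have hf₂ : s(c, u) ∈ w.edges.toFinset := by
      rw [hmemC', hedges₁]; simp
    have hqmem : ∀ f' ∈ q.edges, f' ∈ w.edges.toFinset := by
      intro f' hf'
      rw [hmemC', hedges₁]
      exact List.mem_cons_of_mem _ (List.mem_append_left _ hf')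
    -- interior edges are fixed by σ
    have hfix : ∀ f' ∈ q.edges, σ f' = f' := by
      intro f' hf'
      obtain ⟨hσ1, hσ2⟩ := hσ f' (hqmem f' hf')
      refine preim_not_u hne hσ1 hσ2 ?_
      intro hu'
      exact hqs u (mem_edges_of_mem hu' hf') rfl
    -- the values of σ on the two edges at u
    obtain ⟨hσ11, hσ12⟩ := hσ _ hf₁
    obtain ⟨hσ21, hσ22⟩ := hσ _ hf₂
    have hv1 : σ s(u, a) = s(u, a) ∨ σ s(u, a) = s(v, a) := preim_u hne hσ11 hau hav hσ12
    have hv2 : σ s(c, u) = s(u, c) ∨ σ s(c, u) = s(v, c) := by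
      refine preim_u hne hσ21 hcu hcv ?_
      rw [hσ22]; exact Sym2.eq_swap
    obtain ⟨qG, hqGs, hqGe⟩ := walk_down hne q hqs hav
    have hqGp : qG.IsPath := by
      rw [SimpleGraph.Walk.isPath_def, hqGs]
      exact hqp.support_nodup
    have hqGsu : ∀ x ∈ qG.support, x ≠ u := by rw [hqGs]; exact hqs
    have hqGsv : ∀ x ∈ qG.support, x ≠ v := by rw [hqGs]; exact hqv
    -- helper to finish given the constructed cycle
    have finish : ∀ (s' : V) (W : G.Walk s' s'), W.IsCycle →
        (∀ f' ∈ w₁.edges, σ f' ∈ W.edges) →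
        (∀ x ∈ W.edges, x = s(u, v) ∨ ∃ f' ∈ w₁.edges, σ f' = x) →
        ∃ C, IsCircuit G C ∧ (w.edges.toFinset).image σ ⊆ C ∧
          C ⊆ insert s(u, v) ((w.edges.toFinset).image σ) := by
      intro s' W hWc hsub1 hsub2
      refine ⟨W.edges.toFinset, ⟨s', W, hWc, rfl⟩, ?_, ?_⟩
      · intro x hx
        obtain ⟨f', hf', rfl⟩ := Finset.mem_image.1 hx
        rw [List.mem_toFinset]
        exact hsub1 f' ((hmemC' f').1 hf')
      · intro x hx
        rw [List.mem_toFinset] at hx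
        rcases hsub2 x hx with rfl | ⟨f', hf', rfl⟩
        · exact Finset.mem_insert_self _ _
        · exact Finset.mem_insert_of_mem
            (Finset.mem_image.2 ⟨f', (hmemC' f').2 hf', rfl⟩)
    rcases hv1 with hv1 | hv1 <;> rcases hv2 with hv2 | hv2
    · -- both lift to u
      have h1G : G.Adj u a := (SimpleGraph.mem_edgeSet G).1 (hv1 ▸ hσ11)
      have h2G : G.Adj c u := by
        have := (SimpleGraph.mem_edgeSet G).1 (hv2 ▸ hσ21)
        exact this.symm
      obtain ⟨hWc, hWe⟩ := cyc1 h1G qG h2G hqGp hqGsu hac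
      refine finish u _ hWc ?_ ?_
      · intro f' hf'
        rw [hedges₁] at hf'
        rw [hWe, hqGe]
        rcases List.mem_cons.1 hf' with rfl | hf'
        · rw [hv1]; exact List.mem_cons_self
        rcases List.mem_append.1 hf' with hf' | hf'
        · rw [hfix f' hf']
          exact List.mem_cons_of_mem _ (List.mem_append_left _ hf')
        · rcases List.mem_singleton.1 hf' with rfl
          rw [hv2]
          refine List.mem_cons_of_mem _ (List.mem_append_right _ ?_)
          rw [show s(u,c) = s(c,u) from Sym2.eq_swap]
          exact List.mem_singleton.2 rfl
      · intro x hx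
        rw [hWe, hqGe] at hx
        right
        rcases List.mem_cons.1 hx with rfl | hx
        · refine ⟨s(u, a), ?_, hv1⟩
          rw [hedges₁]; exact List.mem_cons_self
        rcases List.mem_append.1 hx with hx | hx
        · refine ⟨x, ?_, hfix x hx⟩
          rw [hedges₁]; exact List.mem_cons_of_mem _ (List.mem_append_left _ hx)
        · rcases List.mem_singleton.1 hx with rfl
          refine ⟨s(c, u), ?_, ?_⟩
          · rw [hedges₁]; simp
          · rw [hv2]; exact Sym2.eq_swap
    · -- first lifts to u, second to v : cycle through e
      have h1G : G.Adj u a := (SimpleGraph.mem_edgeSet G).1 (hv1 ▸ hσ11)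
      have h2G : G.Adj c v := by
        have := (SimpleGraph.mem_edgeSet G).1 (hv2 ▸ hσ21)
        exact this.symm
      obtain ⟨hWc, hWe⟩ := cyc2 h1G qG h2G huv.symm hqGp hqGsu hqGsv hac hav
        (fun h => hcu h)
      refine finish u _ hWc ?_ ?_
      · intro f' hf'
        rw [hedges₁] at hf'
        rw [hWe, hqGe]
        rcases List.mem_cons.1 hf' with rfl | hf'
        · rw [hv1]; exact List.mem_cons_self
        rcases List.mem_append.1 hf' with hf' | hf'
        · rw [hfix f' hf']
          exact List.mem_cons_of_mem _ (List.mem_append_left _ hf')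
        · rcases List.mem_singleton.1 hf' with rfl
          rw [hv2]
          refine List.mem_cons_of_mem _ (List.mem_append_right _ ?_)
          rw [show s(v,c) = s(c,v) from Sym2.eq_swap]
          exact List.mem_cons_self
      · intro x hx
        rw [hWe, hqGe] at hx
        rcases List.mem_cons.1 hx with rfl | hx
        · refine Or.inr ⟨s(u, a), ?_, hv1⟩
          rw [hedges₁]; exact List.mem_cons_self
        rcases List.mem_append.1 hx with hx | hx
        · refine Or.inr ⟨x, ?_, hfix x hx⟩
          rw [hedges₁]; exact List.mem_cons_of_mem _ (List.mem_append_left _ hx)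
        rcases List.mem_cons.1 hx with rfl | hx
        · refine Or.inr ⟨s(c, u), ?_, ?_⟩
          · rw [hedges₁]; simp
          · rw [hv2]; exact Sym2.eq_swap
        · rcases List.mem_singleton.1 hx with rfl
          exact Or.inl Sym2.eq_swap
    · -- first lifts to v, second to u : cycle through e
      have h1G : G.Adj v a := (SimpleGraph.mem_edgeSet G).1 (hv1 ▸ hσ11)
      have h2G : G.Adj c u := by
        have := (SimpleGraph.mem_edgeSet G).1 (hv2 ▸ hσ21)
        exact this.symm
      obtain ⟨hWc, hWe⟩ := cyc2 h1G qG h2G huv hqGp hqGsv hqGsu hac hau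
        (fun h => hcv h)
      refine finish v _ hWc ?_ ?_
      · intro f' hf'
        rw [hedges₁] at hf'
        rw [hWe, hqGe]
        rcases List.mem_cons.1 hf' with rfl | hf'
        · rw [hv1]; exact List.mem_cons_self
        rcases List.mem_append.1 hf' with hf' | hf'
        · rw [hfix f' hf']
          exact List.mem_cons_of_mem _ (List.mem_append_left _ hf')
        · rcases List.mem_singleton.1 hf' with rfl
          rw [hv2]
          refine List.mem_cons_of_mem _ (List.mem_append_right _ ?_)
          rw [show s(u,c) = s(c,u) from Sym2.eq_swap]
          exact List.mem_cons_self
      · intro x hx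
        rw [hWe, hqGe] at hx
        rcases List.mem_cons.1 hx with rfl | hx
        · refine Or.inr ⟨s(u, a), ?_, hv1⟩
          rw [hedges₁]; exact List.mem_cons_self
        rcases List.mem_append.1 hx with hx | hx
        · refine Or.inr ⟨x, ?_, hfix x hx⟩
          rw [hedges₁]; exact List.mem_cons_of_mem _ (List.mem_append_left _ hx)
        rcases List.mem_cons.1 hx with rfl | hx
        · refine Or.inr ⟨s(c, u), ?_, ?_⟩
          · rw [hedges₁]; simp
          · rw [hv2]; exact Sym2.eq_swap
        · rcases List.mem_singleton.1 hx with rfl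
          exact Or.inl rfl
    · -- both lift to v
      have h1G : G.Adj v a := (SimpleGraph.mem_edgeSet G).1 (hv1 ▸ hσ11)
      have h2G : G.Adj c v := by
        have := (SimpleGraph.mem_edgeSet G).1 (hv2 ▸ hσ21)
        exact this.symm
      obtain ⟨hWc, hWe⟩ := cyc1 h1G qG h2G hqGp hqGsv hac
      refine finish v _ hWc ?_ ?_
      · intro f' hf'
        rw [hedges₁] at hf'
        rw [hWe, hqGe]
        rcases List.mem_cons.1 hf' with rfl | hf'
        · rw [hv1]; exact List.mem_cons_self
        rcases List.mem_append.1 hf' with hf' | hf'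
        · rw [hfix f' hf']
          exact List.mem_cons_of_mem _ (List.mem_append_left _ hf')
        · rcases List.mem_singleton.1 hf' with rfl
          rw [hv2]
          refine List.mem_cons_of_mem _ (List.mem_append_right _ ?_)
          rw [show s(v,c) = s(c,v) from Sym2.eq_swap]
          exact List.mem_singleton.2 rfl
      · intro x hx
        rw [hWe, hqGe] at hx
        right
        rcases List.mem_cons.1 hx with rfl | hx
        · refine ⟨s(u, a), ?_, hv1⟩
          rw [hedges₁]; exact List.mem_cons_self
        rcases List.mem_append.1 hx with hx | hx
        · refine ⟨x, ?_, hfix x hx⟩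
          rw [hedges₁]; exact List.mem_cons_of_mem _ (List.mem_append_left _ hx)
        · rcases List.mem_singleton.1 hx with rfl
          refine ⟨s(c, u), ?_, ?_⟩
          · rw [hedges₁]; simp
          · rw [hv2]; exact Sym2.eq_swap
  · -- u not in the support: the cycle avoids u and v entirely
    have hsupp : ∀ x ∈ w.support, x ≠ u := fun x hx h => hu (h ▸ hx)
    have hfix : ∀ f' ∈ w.edges, σ f' = f' := by
      intro f' hf'
      obtain ⟨hσ1, hσ2⟩ := hσ f' (List.mem_toFinset.2 hf')
      refine preim_not_u hne hσ1 hσ2 ?_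
      intro hu'
      exact hsupp u (mem_edges_of_mem hu' hf') rfl
    have hsv : s ≠ v := by
      obtain ⟨a, c, h₁, q, h₂, hdec, _⟩ := cycle_decomp w hw
      exact adj_ne_v hne h₁
    obtain ⟨wG, hwGs, hwGe⟩ := walk_down hne w hsupp hsv
    refine ⟨w.edges.toFinset, ⟨s, wG, cycle_of_eq hw hwGs hwGe, by rw [hwGe]⟩, ?_, ?_⟩
    · intro x hx
      obtain ⟨f', hf', rfl⟩ := Finset.mem_image.1 hx
      rw [hfix f' (List.mem_toFinset.1 hf')]
      exact hf'
    · intro x hx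
      exact Finset.mem_insert_of_mem (Finset.mem_image.2
        ⟨x, hx, hfix x (List.mem_toFinset.1 hx)⟩)

private def MaxPre (G : SimpleGraph V) (ord : Sym2 V → ℕ) (u v : V) (F' : Finset (Sym2 V))
    (f : Sym2 V) : Prop :=
  f ∈ G.edgeFinset ∧ cmap u v f ∈ F' ∧ ord f = contractOrd G u v ord (cmap u v f)

private lemma path_loop {b : V} {r : G.Walk b b} (h : r.IsPath) :
    r = SimpleGraph.Walk.nil := by
  cases r with
  | nil => rfl
  | cons h' p =>
    exfalso
    have := h.support_nodup
    rw [SimpleGraph.Walk.support_cons, List.nodup_cons] at this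
    exact this.1 p.end_mem_support

private lemma proj_finish {ord : Sym2 V → ℕ} {F' : Finset (Sym2 V)}
    (hF' : IsBCF (contractEdge G u v) (contractOrd G u v ord) F')
    {g : Sym2 V} (hgE : g ∈ G.edgeFinset)
    {s' : V} (W : (contractEdge G u v).Walk s' s') (hWc : W.IsCycle)
    {D : Sym2 V → Prop}
    (hP : ∀ f' ∈ W.edges, ∃ f, D f ∧ cmap u v f = f')
    (hmax : ∀ f, D f → ord f ≤ ord g)
    (hpre : ∀ f, D f → f ≠ g → MaxPre G ord u v F' f)
    (hgmem : cmap u v g ∈ W.edges) : False := by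
  refine hF'.2 (W.edges.toFinset.erase (cmap u v g))
    ⟨W.edges.toFinset, ⟨s', W, hWc, rfl⟩, cmap u v g, List.mem_toFinset.2 hgmem, ?_, rfl⟩ ?_
  · intro f' hf'
    obtain ⟨f, hDf, rfl⟩ := hP f' (List.mem_toFinset.1 hf')
    by_cases hfg : f = g
    · subst hfg; exact le_refl _
    · obtain ⟨hfE, _, hford⟩ := hpre f hDf hfg
      calc contractOrd G u v ord (cmap u v f) = ord f := hford.symm
        _ ≤ ord g := hmax f hDf
        _ ≤ contractOrd G u v ord (cmap u v g) := co_ge ord hgE rfl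
  · intro f' hf'
    obtain ⟨hne', hf'⟩ := Finset.mem_erase.1 hf'
    obtain ⟨f, hDf, rfl⟩ := hP f' (List.mem_toFinset.1 hf')
    have hfg : f ≠ g := fun h => hne' (by rw [h])
    exact (hpre f hDf hfg).2.1

private lemma b1core {ord : Sym2 V → ℕ} (hord : Set.InjOn ord G.edgeSet) (huv : G.Adj u v)
    {F' : Finset (Sym2 V)} (hF' : IsBCF (contractEdge G u v) (contractOrd G u v ord) F')
    {g : Sym2 V} (hgE : g ∈ G.edgeFinset) {c : V} (q : G.Walk v c) (h₂ : G.Adj c u)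
    (hq : q.IsPath) (hqu : ∀ x ∈ q.support, x ≠ u) (hvc : v ≠ c)
    (hg : g ∈ q.edges ∨ g = s(c, u))
    (hmax : ∀ f, f ∈ q.edges ∨ f = s(c, u) → ord f ≤ ord g)
    (hpre : ∀ f, f ∈ q.edges ∨ f = s(c, u) → f ≠ g → MaxPre G ord u v F' f) : False := by
  have hne : u ≠ v := huv.ne
  obtain ⟨b, h₃, r, rfl⟩ := SimpleGraph.Walk.exists_eq_cons_of_ne hvc q
  have hvr : v ∉ r.support := by
    have := hq.support_nodup
    rw [SimpleGraph.Walk.support_cons, List.nodup_cons] at this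
    exact this.1
  have hbu : b ≠ u := by
    refine hqu b ?_
    rw [SimpleGraph.Walk.support_cons]
    exact List.mem_cons_of_mem _ r.start_mem_support
  have hbv : b ≠ v := fun h => hvr (h ▸ r.start_mem_support)
  have hcv : c ≠ v := fun h => hvr (h ▸ r.end_mem_support)
  have hcu : c ≠ u := h₂.ne
  have hru : ∀ x ∈ r.support, x ≠ u := by
    intro x hx
    refine hqu x ?_
    rw [SimpleGraph.Walk.support_cons]
    exact List.mem_cons_of_mem _ hx
  have hrv : ∀ x ∈ r.support, x ≠ v := fun x hx h => hvr (h ▸ hx)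
  have hqe : (SimpleGraph.Walk.cons h₃ r).edges = s(v, b) :: r.edges :=
    SimpleGraph.Walk.edges_cons _ _
  have hcmap_vb : cmap u v s(v, b) = s(u, b) := by
    rw [cmap_pair, cvm_v, cvm_ne u hbv]
  have hcmap_cu : cmap u v s(c, u) = s(c, u) := by
    refine cmap_fix ?_
    rw [Sym2.mem_iff]; push_neg; exact ⟨Ne.symm hcv, Ne.symm hne⟩
  have hrfix : ∀ f ∈ r.edges, cmap u v f = f := by
    intro f hf
    refine cmap_fix ?_
    intro hvf
    exact hrv v (mem_edges_of_mem hvf hf) rfl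
  by_cases hbc : b = c
  · -- the triangle case
    subst hbc
    have hrnil : r = SimpleGraph.Walk.nil := path_loop (by
      have := hq
      rw [SimpleGraph.Walk.isPath_def, SimpleGraph.Walk.support_cons,
        List.nodup_cons] at this
      rw [SimpleGraph.Walk.isPath_def]
      exact this.2)
    subst hrnil
    -- so q.edges = [s(v,b)] and the other edge is s(b,u)
    have hDg : g = s(v, b) ∨ g = s(b, u) := by
      rcases hg with hg | hg
      · left; rw [hqe] at hg; simpa using hg
      · right; exact hg
    have key : ∀ f1 f2 : Sym2 V, f1 = s(v, b) ∨ f1 = s(b, u) →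
        f2 = s(v, b) ∨ f2 = s(b, u) → f1 ≠ f2 → g = f1 → False := by
      intro f1 f2 h1 h2 hne12 hgf1
      subst hgf1
      have hf2dom : f2 ∈ (SimpleGraph.Walk.cons h₃
          (SimpleGraph.Walk.nil : G.Walk b b)).edges ∨ f2 = s(b, u) := by
        rcases h2 with rfl | rfl
        · left; rw [hqe]; simp
        · right; rfl
      obtain ⟨hf2E, _, hford⟩ := hpre f2 hf2dom (Ne.symm hne12)
      have hcmaps : cmap u v f2 = cmap u v g := by
        rcases h2 with rfl | rfl <;> rcases h1 with rfl | rfl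
        · rfl
        · rw [hcmap_vb, hcmap_cu]; exact Sym2.eq_swap
        · rw [hcmap_vb, hcmap_cu]; exact (Sym2.eq_swap).symm
        · rfl
      have h1' : ord g ≤ contractOrd G u v ord (cmap u v f2) := by
        rw [hcmaps]; exact co_ge ord hgE rfl
      have h2' : ord f2 ≤ ord g := by
        apply hmax f2 hf2dom
      rw [hford] at h2'
      have : ord f2 = ord g := by
        rw [hford]; omega
      exact Ne.symm hne12 (hord (SimpleGraph.mem_edgeFinset.1 hf2E)
        (SimpleGraph.mem_edgeFinset.1 hgE) this)
    have hne12 : s(v, b) ≠ s(b, u) := by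
      intro h
      rw [Sym2.eq_iff] at h
      rcases h with ⟨h1, _⟩ | ⟨h2, _⟩
      · exact hbv h1.symm
      · exact hne h2.symm
    rcases hDg with rfl | rfl
    · exact key _ s(b, u) (Or.inl rfl) (Or.inr rfl) hne12 rfl
    · exact key _ s(v, b) (Or.inr rfl) (Or.inl rfl) (Ne.symm hne12) rfl
  · -- proper projection
    have hub' : (contractEdge G u v).Adj u b := by
      have h := adj_up (u := u) (v := v) h₃ (by rw [cvm_v, cvm_ne u hbv]; exact Ne.symm hbu)
      rwa [cvm_v, cvm_ne u hbv] at h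
    have hcu' : (contractEdge G u v).Adj c u := by
      have h := adj_up (u := u) (v := v) h₂ (by rw [cvm_ne u hcv, cvm_ne u hne]; exact hcu)
      rwa [cvm_ne u hcv, cvm_ne u hne] at h
    obtain ⟨r', hr's, hr'e⟩ := walk_up hne r hrv
    have hr'p : r'.IsPath := by
      rw [SimpleGraph.Walk.isPath_def, hr's]
      have := hq.support_nodup
      rw [SimpleGraph.Walk.support_cons, List.nodup_cons] at this
      exact this.2
    have hr'u : ∀ x ∈ r'.support, x ≠ u := by rw [hr's]; exact hru
    obtain ⟨hWc, hWe⟩ := cyc1 hub' r' hcu' hr'p hr'u hbc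
    refine proj_finish hF' hgE _ hWc (D := fun f =>
      f ∈ (SimpleGraph.Walk.cons h₃ r).edges ∨ f = s(c, u)) ?_ hmax hpre ?_
    · intro f' hf'
      rw [hWe, hr'e] at hf'
      rcases List.mem_cons.1 hf' with rfl | hf'
      · exact ⟨s(v, b), Or.inl (by rw [hqe]; exact List.mem_cons_self), hcmap_vb⟩
      rcases List.mem_append.1 hf' with hf' | hf'
      · exact ⟨f', Or.inl (by rw [hqe]; exact List.mem_cons_of_mem _ hf'), hrfix f' hf'⟩
      · rcases List.mem_singleton.1 hf' with rfl
        exact ⟨s(c, u), Or.inr rfl, hcmap_cu⟩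
    · rw [hWe, hr'e]
      rcases hg with hg | hg
      · rw [hqe] at hg
        rcases List.mem_cons.1 hg with rfl | hg
        · rw [hcmap_vb]; exact List.mem_cons_self
        · rw [hrfix g hg]
          exact List.mem_cons_of_mem _ (List.mem_append_left _ hg)
      · subst hg
        rw [hcmap_cu]
        exact List.mem_cons_of_mem _ (List.mem_append_right _ (List.mem_singleton.2 rfl))

private lemma b2a_proj {ord : Sym2 V → ℕ} (huv : G.Adj u v)
    {F' : Finset (Sym2 V)} (hF' : IsBCF (contractEdge G u v) (contractOrd G u v ord) F')
    {g : Sym2 V} (hgE : g ∈ G.edgeFinset)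
    (w : G.Walk v v) (hw : w.IsCycle) (hu : ∀ x ∈ w.support, x ≠ u)
    (hg : g ∈ w.edges) (hmax : ∀ f ∈ w.edges, ord f ≤ ord g)
    (hpre : ∀ f ∈ w.edges, f ≠ g → MaxPre G ord u v F' f) : False := by
  have hne : u ≠ v := huv.ne
  obtain ⟨a, c, h₁, q, h₂, hdec, hqp, hqs, hac⟩ := cycle_decomp w hw
  have hsupp : ∀ x ∈ q.support, x ∈ w.support := by
    intro x hx
    rw [hdec, SimpleGraph.Walk.support_cons, SimpleGraph.Walk.support_concat]
    exact List.mem_cons_of_mem _ (List.mem_append_left _ hx)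
  have hqu : ∀ x ∈ q.support, x ≠ u := fun x hx => hu x (hsupp x hx)
  have hau : a ≠ u := hqu a q.start_mem_support
  have hcu : c ≠ u := hqu c q.end_mem_support
  have hav : a ≠ v := h₁.ne'
  have hcv : c ≠ v := h₂.ne
  have hedges : w.edges = s(v, a) :: (q.edges ++ [s(c, v)]) := by
    rw [hdec, SimpleGraph.Walk.edges_cons, SimpleGraph.Walk.edges_concat,
      List.concat_eq_append]
  have hqfix : ∀ f ∈ q.edges, cmap u v f = f := by
    intro f hf
    refine cmap_fix ?_
    intro hvf
    exact hqs v (mem_edges_of_mem hvf hf) rfl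
  have hcmap_va : cmap u v s(v, a) = s(u, a) := by rw [cmap_pair, cvm_v, cvm_ne u hav]
  have hcmap_cv : cmap u v s(c, v) = s(c, u) := by rw [cmap_pair, cvm_v, cvm_ne u hcv]
  have hua' : (contractEdge G u v).Adj u a := by
    have h := adj_up (u := u) (v := v) h₁ (by rw [cvm_v, cvm_ne u hav]; exact Ne.symm hau)
    rwa [cvm_v, cvm_ne u hav] at h
  have hcu' : (contractEdge G u v).Adj c u := by
    have h := adj_up (u := u) (v := v) h₂ (by rw [cvm_v, cvm_ne u hcv]; exact hcu)
    rwa [cvm_v, cvm_ne u hcv] at h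
  obtain ⟨q', hq's, hq'e⟩ := walk_up hne q hqs
  have hq'p : q'.IsPath := by
    rw [SimpleGraph.Walk.isPath_def, hq's]
    exact hqp.support_nodup
  have hq'u : ∀ x ∈ q'.support, x ≠ u := by rw [hq's]; exact hqu
  obtain ⟨hWc, hWe⟩ := cyc1 hua' q' hcu' hq'p hq'u hac
  refine proj_finish hF' hgE _ hWc (D := fun f => f ∈ w.edges) ?_ hmax hpre ?_
  · intro f' hf'
    rw [hWe, hq'e] at hf'
    rcases List.mem_cons.1 hf' with rfl | hf'
    · refine ⟨s(v, a), ?_, hcmap_va⟩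
      rw [hedges]; exact List.mem_cons_self
    rcases List.mem_append.1 hf' with hf' | hf'
    · refine ⟨f', ?_, hqfix f' hf'⟩
      rw [hedges]; exact List.mem_cons_of_mem _ (List.mem_append_left _ hf')
    · rcases List.mem_singleton.1 hf' with rfl
      refine ⟨s(c, v), ?_, hcmap_cv⟩
      rw [hedges]
      exact List.mem_cons_of_mem _ (List.mem_append_right _ (List.mem_singleton.2 rfl))
  · rw [hWe, hq'e]
    rw [hedges] at hg
    rcases List.mem_cons.1 hg with rfl | hg
    · rw [hcmap_va]; exact List.mem_cons_self
    rcases List.mem_append.1 hg with hg | hg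
    · rw [hqfix g hg]
      exact List.mem_cons_of_mem _ (List.mem_append_left _ hg)
    · rcases List.mem_singleton.1 hg with rfl
      rw [hcmap_cv]
      exact List.mem_cons_of_mem _ (List.mem_append_right _ (List.mem_singleton.2 rfl))

private lemma mem_tail {s x : V} {w : G.Walk s s} (hw : w.IsCycle) (hx : x ∈ w.support) :
    x ∈ w.support.tail := by
  obtain ⟨a, c, h₁, q, h₂, hdec, _, _, _⟩ := cycle_decomp w hw
  rw [hdec, SimpleGraph.Walk.support_cons] at hx ⊢
  rw [List.tail_cons]
  rcases List.mem_cons.1 hx with rfl | hx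
  · rw [SimpleGraph.Walk.support_concat]
    exact List.mem_append_right _ (List.mem_singleton.2 rfl)
  · exact hx

private lemma u_mem_e : u ∈ s(u, v) := Sym2.mem_mk_left u v

private lemma b1full {ord : Sym2 V → ℕ} (hord : Set.InjOn ord G.edgeSet) (huv : G.Adj u v)
    {F' : Finset (Sym2 V)} (hF' : IsBCF (contractEdge G u v) (contractOrd G u v ord) F')
    {g : Sym2 V} (hgE : g ∈ G.edgeFinset) {s : V} (w : G.Walk s s)
    (hw : w.IsCycle) (he : s(u, v) ∈ w.edges) (hg : g ∈ w.edges) (hge : g ≠ s(u, v))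
    (hmax : ∀ f ∈ w.edges, ord f ≤ ord g)
    (hpre : ∀ f ∈ w.edges, f ≠ g → f ≠ s(u, v) → MaxPre G ord u v F' f) : False := by
  have hne : u ≠ v := huv.ne
  have hu : u ∈ w.support := SimpleGraph.Walk.fst_mem_support_of_mem_edges w he
  set w₁ := w.rotate u hu with hw₁def
  have hw₁ : w₁.IsCycle := hw.rotate hu
  have hperm : List.Perm w₁.edges w.edges := (w.rotate_edges u hu).perm
  obtain ⟨a, c, h₁, q, h₂, hdec, hqp, hqs, hac⟩ := cycle_decomp w₁ hw₁
  have hedges : w₁.edges = s(u, a) :: (q.edges ++ [s(c, u)]) := by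
    rw [hdec, SimpleGraph.Walk.edges_cons, SimpleGraph.Walk.edges_concat,
      List.concat_eq_append]
  have hnd : w₁.edges.Nodup := by
    have := hw₁
    rw [SimpleGraph.Walk.isCycle_def, SimpleGraph.Walk.isTrail_def] at this
    exact this.1
  have hqe_ne : s(u, v) ∉ q.edges := fun hh =>
    hqs u (mem_edges_of_mem u_mem_e hh) rfl
  have hqg_ne : ∀ f ∈ q.edges, f ≠ s(u, v) := fun f hf hfe => hqe_ne (hfe ▸ hf)
  have hmax₁ : ∀ f ∈ w₁.edges, ord f ≤ ord g := fun f hf => hmax f (hperm.mem_iff.1 hf)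
  have hpre₁ : ∀ f ∈ w₁.edges, f ≠ g → f ≠ s(u, v) → MaxPre G ord u v F' f :=
    fun f hf => hpre f (hperm.mem_iff.1 hf)
  have hg₁ : g ∈ w₁.edges := hperm.mem_iff.2 hg
  have he₁ : s(u, v) ∈ w₁.edges := hperm.mem_iff.2 he
  have hlast_mem : s(c, u) ∈ w₁.edges := by rw [hedges]; simp
  have hhead_ne_last : s(u, a) ≠ s(c, u) := by
    rw [hedges] at hnd
    rw [List.nodup_cons] at hnd
    intro hh
    exact hnd.1 (hh ▸ List.mem_append_right _ (List.mem_singleton.2 rfl))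
  rw [hedges] at he₁
  rcases List.mem_cons.1 he₁ with hea | he₁
  · -- the first edge is e, so a = v
    have hav : v = a := by
      have := hea
      rw [Sym2.eq_iff] at this
      rcases this with ⟨_, h'⟩ | ⟨h', _⟩
      · exact h'
      · exact absurd h' h₁.ne
    subst hav
    refine b1core hord huv hF' hgE q h₂ hqp hqs hac ?_ ?_ ?_
    · rw [hedges] at hg₁
      rcases List.mem_cons.1 hg₁ with rfl | hg₁
      · exact absurd hea.symm hge
      rcases List.mem_append.1 hg₁ with hg₁ | hg₁
      · exact Or.inl hg₁
      · exact Or.inr (List.mem_singleton.1 hg₁)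
    · intro f hf
      rcases hf with hf | rfl
      · refine hmax₁ f ?_
        rw [hedges]
        exact List.mem_cons_of_mem _ (List.mem_append_left _ hf)
      · exact hmax₁ _ hlast_mem
    · intro f hf hfg
      have hfe : f ≠ s(u, v) := by
        rcases hf with hf | rfl
        · exact hqg_ne f hf
        · intro hh; exact hhead_ne_last (hea.symm ▸ hh.symm ▸ rfl)
      refine hpre₁ f ?_ hfg hfe
      rw [hedges]
      rcases hf with hf | rfl
      · exact List.mem_cons_of_mem _ (List.mem_append_left _ hf)
      · simp
  rcases List.mem_append.1 he₁ with he₁ | he₁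
  · exact absurd he₁ hqe_ne
  · -- the last edge is e, so c = v
    have hecu : s(c, u) = s(u, v) := (List.mem_singleton.1 he₁).symm
    have hcv : v = c := by
      have := hecu
      rw [Sym2.eq_iff] at this
      rcases this with ⟨_, h'⟩ | ⟨h', _⟩
      · exact absurd h' hne
      · exact h'.symm
    subst hcv
    have hhead_ne : s(u, a) ≠ s(u, v) := fun hh => hhead_ne_last (hh.trans hecu.symm)
    refine b1core hord huv hF' hgE q.reverse h₁.symm hqp.reverse ?_ (Ne.symm hac) ?_ ?_ ?_
    · intro x hx
      rw [SimpleGraph.Walk.support_reverse, List.mem_reverse] at hx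
      exact hqs x hx
    · rw [hedges] at hg₁
      rw [SimpleGraph.Walk.edges_reverse]
      rcases List.mem_cons.1 hg₁ with rfl | hg₁
      · right; exact Sym2.eq_swap
      rcases List.mem_append.1 hg₁ with hg₁ | hg₁
      · exact Or.inl (List.mem_reverse.2 hg₁)
      · exact absurd ((List.mem_singleton.1 hg₁).trans hecu) hge
    · intro f hf
      apply hmax₁
      rw [hedges]
      rcases hf with hf | rfl
      · rw [SimpleGraph.Walk.edges_reverse, List.mem_reverse] at hf
        exact List.mem_cons_of_mem _ (List.mem_append_left _ hf)
      · rw [show s(a, u) = s(u, a) from Sym2.eq_swap]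
        exact List.mem_cons_self
    · intro f hf hfg
      have hfe : f ≠ s(u, v) := by
        rcases hf with hf | rfl
        · rw [SimpleGraph.Walk.edges_reverse, List.mem_reverse] at hf
          exact hqg_ne f hf
        · rw [show s(a, u) = s(u, a) from Sym2.eq_swap]
          exact hhead_ne
      refine hpre₁ f ?_ hfg hfe
      rw [hedges]
      rcases hf with hf | rfl
      · rw [SimpleGraph.Walk.edges_reverse, List.mem_reverse] at hf
        exact List.mem_cons_of_mem _ (List.mem_append_left _ hf)
      · rw [show s(a, u) = s(u, a) from Sym2.eq_swap]
        exact List.mem_cons_self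

private lemma collision_contra {ord : Sym2 V → ℕ} (huv : G.Adj u v)
    (hsmall : ∀ f ∈ G.edgeFinset, f ≠ s(u, v) → ord s(u, v) < ord f)
    {Fa Fb : Finset (Sym2 V)} (hFa : IsBCF G ord Fa) (heFa : s(u, v) ∈ Fa)
    (hFb : IsBCF G ord Fb) (heFb : s(u, v) ∈ Fb)
    {w : V} (hwu : w ≠ u) (hwv : w ≠ v) (h1 : G.Adj w u) (h2 : G.Adj w v)
    (ha : s(w, u) ∈ Fa) (hb : s(w, v) ∈ Fb) : False := by
  have hne : u ≠ v := huv.ne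
  obtain ⟨wk, hwk, hwke⟩ := tri_circuit huv hwu hwv h2.symm h1
  have hwu_ne : s(w, u) ≠ s(u, v) := by
    intro hh
    rw [Sym2.eq_iff] at hh
    rcases hh with ⟨_, hh⟩ | ⟨hh, _⟩
    · exact hne hh
    · exact hwv hh
  have hwv_ne : s(w, v) ≠ s(u, v) := by
    intro hh
    rw [Sym2.eq_iff] at hh
    rcases hh with ⟨hh, _⟩ | ⟨hh, _⟩
    · exact hwu hh
    · exact hwv hh
  have hDmem : ∀ f ∈ wk.edges.toFinset,
      f = s(u, v) ∨ f = s(w, v) ∨ f = s(w, u) := by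
    intro f hf
    rw [List.mem_toFinset, hwke] at hf
    rcases List.mem_cons.1 hf with rfl | hf
    · exact Or.inl rfl
    rcases List.mem_cons.1 hf with rfl | hf
    · exact Or.inr (Or.inl Sym2.eq_swap)
    · rcases List.mem_singleton.1 hf with rfl
      exact Or.inr (Or.inr rfl)
  rcases le_total (ord s(w, u)) (ord s(w, v)) with hle | hle
  · -- erase s(w,v) : broken circuit {e, s(w,u)} ⊆ Fa
    refine hFa.2 (wk.edges.toFinset.erase s(w, v))
      ⟨wk.edges.toFinset, ⟨u, wk, hwk, rfl⟩, s(w, v), ?_, ?_, rfl⟩ ?_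
    · rw [List.mem_toFinset, hwke, show s(w, v) = s(v, w) from Sym2.eq_swap]
      exact List.mem_cons_of_mem _ (List.mem_cons_self)
    · intro f hf
      rcases hDmem f hf with rfl | rfl | rfl
      · exact le_of_lt (hsmall _ (SimpleGraph.mem_edgeFinset.2 h2) hwv_ne)
      · exact le_refl _
      · exact hle
    · intro f hf
      obtain ⟨hfne, hf⟩ := Finset.mem_erase.1 hf
      rcases hDmem f hf with rfl | rfl | rfl
      · exact heFa
      · exact absurd rfl hfne
      · exact ha
  · -- erase s(w,u) : broken circuit {e, s(w,v)} ⊆ Fb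
    refine hFb.2 (wk.edges.toFinset.erase s(w, u))
      ⟨wk.edges.toFinset, ⟨u, wk, hwk, rfl⟩, s(w, u), ?_, ?_, rfl⟩ ?_
    · rw [List.mem_toFinset, hwke]
      exact List.mem_cons_of_mem _ (List.mem_cons_of_mem _ (List.mem_singleton.2 rfl))
    · intro f hf
      rcases hDmem f hf with rfl | rfl | rfl
      · exact le_of_lt (hsmall _ (SimpleGraph.mem_edgeFinset.2 h1) hwu_ne)
      · exact hle
      · exact le_refl _
    · intro f hf
      obtain ⟨hfne, hf⟩ := Finset.mem_erase.1 hf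
      rcases hDmem f hf with rfl | rfl | rfl
      · exact heFb
      · exact hb
      · exact absurd rfl hfne

end basics

/-- Lemma (in the proof of Whitney's theorem): if `e = uv` is the smallest edge in the
ordering, then `F ↦ F ∖ {e}` (with edges relabelled by the contraction) is a bijection
from the BCF sets of `G` containing `e` to the BCF sets of `G/e` (with the induced
ordering, keeping only the largest of each class of parallel edges). -/
theorem bcf_contract_bijOn (G : SimpleGraph V) (ord : Sym2 V → ℕ)
    (hord : Set.InjOn ord G.edgeSet) (u v : V) (huv : G.Adj u v)
    (hsmall : ∀ f ∈ G.edgeFinset, f ≠ s(u, v) → ord s(u, v) < ord f) :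
    Set.BijOn
      (fun F : Finset (Sym2 V) =>
        (F.erase s(u, v)).image (Sym2.map fun w => if w = v then u else w))
      {F | IsBCF G ord F ∧ s(u, v) ∈ F}
      {F | IsBCF (contractEdge G u v) (contractOrd G u v ord) F} := by
  have hne : u ≠ v := huv.ne
  have hcm : (Sym2.map fun w => if w = v then u else w) = cmap u v := rfl
  have hcme : cmap u v s(u, v) = s(u, u) := by rw [cmap_pair, cvm_v, cvm_ne u hne]
  refine ⟨?_, ?_, ?_⟩
  · -- MapsTo
    rintro F ⟨hF, heF⟩
    simp only [Set.mem_setOf_eq]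
    constructor
    · intro f' hf'
      obtain ⟨f, hf, rfl⟩ := Finset.mem_image.1 hf'
      obtain ⟨hfe, hfF⟩ := Finset.mem_erase.1 hf
      rw [hcm]
      exact SimpleGraph.mem_edgeFinset.2
        (edge_up hne (SimpleGraph.mem_edgeFinset.1 (hF.1 hfF)) hfe)
    · rintro B' ⟨C', hC', m', hm', hmax', rfl⟩ hB'sub
      rw [hcm] at hB'sub
      have hm'E : m' ∈ (contractEdge G u v).edgeSet := by
        obtain ⟨s, wc, hwc, hCeq⟩ := hC'
        exact wc.edges_subset_edgeSet (List.mem_toFinset.1 (hCeq ▸ hm'))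
      obtain ⟨gm, hgmE, hgmc, hgmord⟩ := co_attained ord hm'E
      set σ : Sym2 V → Sym2 V := fun f' =>
        if f' = m' then gm
        else if hb : f' ∈ (F.erase s(u, v)).image (cmap u v)
          then (Finset.mem_image.1 hb).choose else f' with hσdef
      have hσm : σ m' = gm := by rw [hσdef]; simp
      have hσne : ∀ f' ∈ C', f' ≠ m' → σ f' ∈ F.erase s(u, v) ∧ cmap u v (σ f') = f' := by
        intro f' hf' hm
        have hmem : f' ∈ (F.erase s(u, v)).image (cmap u v) :=
          hB'sub (Finset.mem_erase.2 ⟨hm, hf'⟩)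
        have hval : σ f' = (Finset.mem_image.1 hmem).choose := by
          rw [hσdef]
          simp only [if_neg hm]
          rw [dif_pos hmem]
        obtain ⟨hc1, hc2⟩ := (Finset.mem_image.1 hmem).choose_spec
        rw [hval]
        exact ⟨hc1, hc2⟩
      have hσspec : ∀ f' ∈ C', σ f' ∈ G.edgeSet ∧ cmap u v (σ f') = f' := by
        intro f' hf'
        by_cases hm : f' = m'
        · subst hm
          rw [hσm]
          exact ⟨SimpleGraph.mem_edgeFinset.1 hgmE, hgmc⟩
        · obtain ⟨h1, h2⟩ := hσne f' hf' hm
          exact ⟨SimpleGraph.mem_edgeFinset.1 (hF.1 (Finset.mem_of_mem_erase h1)), h2⟩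
      obtain ⟨C, hCc, hsub1, hsub2⟩ := lift_circuit huv hC' σ hσspec
      have hgmem : gm ∈ C := hsub1 (Finset.mem_image.2 ⟨m', hm', hσm⟩)
      have hgne : gm ≠ s(u, v) := by
        rintro rfl
        rw [hcme] at hgmc
        have : (contractEdge G u v).Adj u u := by
          rw [← SimpleGraph.mem_edgeSet, hgmc]
          exact hm'E
        exact (contractEdge G u v).irrefl this
      refine hF.2 (C.erase gm) ⟨C, hCc, gm, hgmem, ?_, rfl⟩ ?_
      · intro f hf
        rcases Finset.mem_insert.1 (hsub2 hf) with rfl | hf'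
        · exact le_of_lt (hsmall gm hgmE hgne)
        · obtain ⟨f', hf'C, rfl⟩ := Finset.mem_image.1 hf'
          obtain ⟨hσ1, hσ2⟩ := hσspec f' hf'C
          calc ord (σ f') ≤ contractOrd G u v ord f' :=
                co_ge ord (SimpleGraph.mem_edgeFinset.2 hσ1) hσ2
            _ ≤ contractOrd G u v ord m' := hmax' f' hf'C
            _ = ord gm := hgmord.symm
      · intro f hf
        obtain ⟨hfne, hfC⟩ := Finset.mem_erase.1 hf
        rcases Finset.mem_insert.1 (hsub2 hfC) with rfl | hf'
        · exact heF
        · obtain ⟨f', hf'C, rfl⟩ := Finset.mem_image.1 hf'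
          by_cases hm : f' = m'
          · subst hm
            exact absurd hσm hfne
          · exact Finset.mem_of_mem_erase (hσne f' hf'C hm).1
  · -- InjOn
    have key : ∀ Fa Fb : Finset (Sym2 V), IsBCF G ord Fa → s(u, v) ∈ Fa →
        IsBCF G ord Fb → s(u, v) ∈ Fb →
        (Fa.erase s(u, v)).image (Sym2.map fun w => if w = v then u else w) =
          (Fb.erase s(u, v)).image (Sym2.map fun w => if w = v then u else w) →
        Fa ⊆ Fb := by
      intro Fa Fb hFa hea hFb heb him f hf
      by_cases hfe : f = s(u, v)
      · exact hfe ▸ heb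
      · have hf' : f ∈ Fa.erase s(u, v) := Finset.mem_erase.2 ⟨hfe, hf⟩
        have hmem : cmap u v f ∈ (Fb.erase s(u, v)).image (cmap u v) := by
          rw [← hcm, ← him, hcm]
          exact Finset.mem_image_of_mem _ hf'
        obtain ⟨f₂, hf₂, hmapeq⟩ := Finset.mem_image.1 hmem
        obtain ⟨hf₂e, hf₂F⟩ := Finset.mem_erase.1 hf₂
        by_cases heq : f₂ = f
        · exact heq ▸ hf₂F
        · exfalso
          have hfG : f ∈ G.edgeSet := SimpleGraph.mem_edgeFinset.1 (hFa.1 hf)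
          have hf₂G : f₂ ∈ G.edgeSet := SimpleGraph.mem_edgeFinset.1 (hFb.1 hf₂F)
          rcases cmap_cases hne hfG hfe with ⟨hvf, hfix⟩ | ⟨w, hwu, hwv, hfval, hmv⟩
          · rcases cmap_cases hne hf₂G hf₂e with ⟨hvf₂, hfix₂⟩ | ⟨w₂, hw₂u, hw₂v, hf₂val, hmv₂⟩
            · exact heq (by rw [← hfix₂, ← hfix, hmapeq])
            · -- f is fixed and equals s(w₂, u); f₂ = s(w₂, v)
              have hfval' : f = s(w₂, u) := by rw [← hfix, ← hmapeq, hmv₂]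
              have hadj1 : G.Adj w₂ u := (SimpleGraph.mem_edgeSet G).1 (hfval' ▸ hfG)
              have hadj2 : G.Adj w₂ v := (SimpleGraph.mem_edgeSet G).1 (hf₂val ▸ hf₂G)
              exact collision_contra huv hsmall hFa hea hFb heb hw₂u hw₂v hadj1 hadj2
                (hfval' ▸ hf) (hf₂val ▸ hf₂F)
          · rcases cmap_cases hne hf₂G hf₂e with ⟨hvf₂, hfix₂⟩ | ⟨w₂, hw₂u, hw₂v, hf₂val, hmv₂⟩
            · -- f = s(w, v), f₂ fixed and equals s(w, u)
              have hf₂val' : f₂ = s(w, u) := by rw [← hfix₂, hmapeq, hmv]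
              have hadj1 : G.Adj w u := (SimpleGraph.mem_edgeSet G).1 (hf₂val' ▸ hf₂G)
              have hadj2 : G.Adj w v := (SimpleGraph.mem_edgeSet G).1 (hfval ▸ hfG)
              exact collision_contra huv hsmall hFb heb hFa hea hwu hwv hadj1 hadj2
                (hf₂val' ▸ hf₂F) (hfval ▸ hf)
            · -- both move
              have : s(w₂, u) = s(w, u) := by rw [← hmv₂, ← hmv, hmapeq]
              rw [Sym2.eq_iff] at this
              rcases this with ⟨hww, _⟩ | ⟨hwu', _⟩
              · exact heq (by rw [hf₂val, hfval, hww])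
              · exact hw₂u hwu'
    rintro F₁ ⟨hF₁, he₁⟩ F₂ ⟨hF₂, he₂⟩ himg
    exact Finset.Subset.antisymm (key F₁ F₂ hF₁ he₁ hF₂ he₂ himg)
      (key F₂ F₁ hF₂ he₂ hF₁ he₁ himg.symm)
  · -- SurjOn
    rintro F' hF''
    simp only [Set.mem_setOf_eq] at hF''
    set σ' : Sym2 V → Sym2 V := fun f' =>
      if hf : f' ∈ (contractEdge G u v).edgeSet then (co_attained (G := G) ord hf).choose
      else f' with hσ'def
    have hspec : ∀ f' ∈ F', σ' f' ∈ G.edgeFinset ∧ cmap u v (σ' f') = f' ∧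
        ord (σ' f') = contractOrd G u v ord f' := by
      intro f' hf'
      have hfE : f' ∈ (contractEdge G u v).edgeSet :=
        SimpleGraph.mem_edgeFinset.1 (hF''.1 hf')
      have hval : σ' f' = (co_attained (G := G) ord hfE).choose := by
        rw [hσ'def]; exact dif_pos hfE
      obtain ⟨h1, h2, h3⟩ := (co_attained (G := G) ord hfE).choose_spec
      rw [hval]
      exact ⟨h1, h2, h3.symm ▸ h3⟩
    set F : Finset (Sym2 V) := insert s(u, v) (F'.image σ') with hFdef
    have hnotE : s(u, v) ∉ F'.image σ' := by
      intro hmem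
      obtain ⟨f', hf', heq⟩ := Finset.mem_image.1 hmem
      have h2 := (hspec f' hf').2.1
      rw [heq, hcme] at h2
      have : (contractEdge G u v).Adj u u := by
        rw [← SimpleGraph.mem_edgeSet, h2]
        exact SimpleGraph.mem_edgeFinset.1 (hF''.1 hf')
      exact (contractEdge G u v).irrefl this
    have hMP : ∀ f ∈ F, f ≠ s(u, v) → MaxPre G ord u v F' f := by
      intro f hf hfe
      rcases Finset.mem_insert.1 hf with rfl | hf
      · exact absurd rfl hfe
      · obtain ⟨f', hf', rfl⟩ := Finset.mem_image.1 hf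
        obtain ⟨h1, h2, h3⟩ := hspec f' hf'
        refine ⟨h1, ?_, ?_⟩
        · rw [h2]; exact hf'
        · rw [h2]; exact h3
    refine ⟨F, ⟨⟨?_, ?_⟩, Finset.mem_insert_self _ _⟩, ?_⟩
    · -- F ⊆ edgeFinset
      intro f hf
      rcases Finset.mem_insert.1 hf with rfl | hf
      · exact SimpleGraph.mem_edgeFinset.2 huv
      · obtain ⟨f', hf', rfl⟩ := Finset.mem_image.1 hf
        exact (hspec f' hf').1
    · -- F is broken-circuit free
      rintro B ⟨C, hC, g, hgC, hgmax, rfl⟩ hBF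
      obtain ⟨s, w, hw, rfl⟩ := hC
      have hgw : g ∈ w.edges := List.mem_toFinset.1 hgC
      have hgE : g ∈ G.edgeFinset :=
        SimpleGraph.mem_edgeFinset.2 (w.edges_subset_edgeSet hgw)
      obtain ⟨a0, c0, h10, q0, h20, hdec0, _, _, hac0⟩ := cycle_decomp w hw
      have hmem1 : s(s, a0) ∈ w.edges := by
        rw [hdec0, SimpleGraph.Walk.edges_cons]
        exact List.mem_cons_self
      have hmem2 : s(c0, s) ∈ w.edges := by
        rw [hdec0, SimpleGraph.Walk.edges_cons, SimpleGraph.Walk.edges_concat,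
          List.concat_eq_append]
        exact List.mem_cons_of_mem _ (List.mem_append_right _ (List.mem_singleton.2 rfl))
      have hheadlast : s(s, a0) ≠ s(c0, s) := by
        intro hh
        rw [Sym2.eq_iff] at hh
        rcases hh with ⟨hsc, _⟩ | ⟨_, hac⟩
        · exact h20.ne hsc.symm
        · exact hac0 hac
      have hge : g ≠ s(u, v) := by
        rintro rfl
        have pick : ∃ f ∈ w.edges, f ≠ s(u, v) := by
          by_cases h : s(s, a0) = s(u, v)
          · exact ⟨s(c0, s), hmem2, fun hh => hheadlast (h.trans hh.symm)⟩
          · exact ⟨s(s, a0), hmem1, h⟩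
        obtain ⟨f, hfw, hfne⟩ := pick
        have h1 := hsmall f (SimpleGraph.mem_edgeFinset.2 (w.edges_subset_edgeSet hfw)) hfne
        have h2 := hgmax f (List.mem_toFinset.2 hfw)
        omega
      have hpreC : ∀ f ∈ w.edges, f ≠ g → f ≠ s(u, v) → MaxPre G ord u v F' f := by
        intro f hf hfg hfe
        exact hMP f (hBF (Finset.mem_erase.2 ⟨hfg, List.mem_toFinset.2 hf⟩)) hfe
      have hmaxw : ∀ f ∈ w.edges, ord f ≤ ord g :=
        fun f hf => hgmax f (List.mem_toFinset.2 hf)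
      by_cases hv : v ∈ w.support
      · by_cases heEdge : s(u, v) ∈ w.edges
        · exact b1full hord huv hF'' hgE w hw heEdge hgw hge hmaxw hpreC
        · by_cases hu : u ∈ w.support
          · -- both u and v on the cycle, e not an edge: split into two cycles through e
            set w₁ := w.rotate v hv with hw₁def
            have hw₁ : w₁.IsCycle := hw.rotate hv
            have hperm : List.Perm w₁.edges w.edges := (w.rotate_edges v hv).perm
            have heE₁ : s(u, v) ∉ w₁.edges := fun hh => heEdge (hperm.mem_iff.1 hh)
            obtain ⟨a, c, h₁, q, h₂, hdec, hqp, hqs, hac⟩ := cycle_decomp w₁ hw₁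
            have hedges₁ : w₁.edges = s(v, a) :: (q.edges ++ [s(c, v)]) := by
              rw [hdec, SimpleGraph.Walk.edges_cons, SimpleGraph.Walk.edges_concat,
                List.concat_eq_append]
            have hau : a ≠ u := by
              intro h'
              apply heE₁
              rw [hedges₁, show s(u, v) = s(v, a) from by rw [h']; exact Sym2.eq_swap]
              exact List.mem_cons_self
            have hcu : c ≠ u := by
              intro h'
              apply heE₁
              rw [hedges₁, show s(u, v) = s(c, v) from by rw [h']]
              exact List.mem_cons_of_mem _
                (List.mem_append_right _ (List.mem_singleton.2 rfl))
            have hu₁ : u ∈ w₁.support := by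
              have h1 := mem_tail hw hu
              have h2 := (w.support_rotate v hv).perm.mem_iff.2 h1
              exact List.mem_of_mem_tail h2
            have huq : u ∈ q.support := by
              rw [hdec, SimpleGraph.Walk.support_cons] at hu₁
              rcases List.mem_cons.1 hu₁ with h' | h'
              · exact absurd h' hne
              · rw [SimpleGraph.Walk.support_concat] at h'
                rcases List.mem_append.1 h' with h' | h'
                · exact h'
                · exact absurd (List.mem_singleton.1 h') hne
            set p₁ := q.takeUntil u huq with hp₁def
            set p₂ := q.dropUntil u huq with hp₂def
            have hqspec : p₁.append p₂ = q := q.take_spec huq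
            have hp₁ : p₁.IsPath := hqp.takeUntil huq
            have hp₂ : p₂.IsPath := hqp.dropUntil huq
            have hqedges : q.edges = p₁.edges ++ p₂.edges := by
              rw [← hqspec, SimpleGraph.Walk.edges_append]
            have hp₁v : ∀ x ∈ p₁.support, x ≠ v :=
              fun x hx => hqs x (SimpleGraph.Walk.support_takeUntil_subset q huq hx)
            have hp₂v : ∀ x ∈ p₂.support, x ≠ v :=
              fun x hx => hqs x (SimpleGraph.Walk.support_dropUntil_subset q huq hx)
            have hp₁sub : ∀ f ∈ p₁.edges, f ∈ w.edges := by
              intro f hf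
              apply hperm.mem_iff.1
              rw [hedges₁]
              exact List.mem_cons_of_mem _ (List.mem_append_left _
                (SimpleGraph.Walk.edges_takeUntil_subset q huq hf))
            have hp₂sub : ∀ f ∈ p₂.edges, f ∈ w.edges := by
              intro f hf
              apply hperm.mem_iff.1
              rw [hedges₁]
              exact List.mem_cons_of_mem _ (List.mem_append_left _
                (SimpleGraph.Walk.edges_dropUntil_subset q huq hf))
            have hva_mem : s(v, a) ∈ w.edges := by
              apply hperm.mem_iff.1
              rw [hedges₁]; exact List.mem_cons_self
            have hcv_mem : s(c, v) ∈ w.edges := by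
              apply hperm.mem_iff.1
              rw [hedges₁]
              exact List.mem_cons_of_mem _
                (List.mem_append_right _ (List.mem_singleton.2 rfl))
            -- build the two cycles through e
            have hW₁ : ((p₁.concat huv).cons h₁).IsCycle ∧
                ((p₁.concat huv).cons h₁).edges = s(v, a) :: (p₁.edges ++ [s(u, v)]) := by
              constructor
              · rw [SimpleGraph.Walk.cons_isCycle_iff]
                constructor
                · rw [SimpleGraph.Walk.isPath_def, SimpleGraph.Walk.support_concat,
                    List.nodup_append]
                  refine ⟨hp₁.support_nodup, by simp, ?_⟩
                  intro x hx y hx2 hxy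
                  rcases List.mem_singleton.1 hx2 with rfl
                  exact hp₁v x hx hxy
                · rw [SimpleGraph.Walk.edges_concat, List.concat_eq_append,
                    List.mem_append, List.mem_singleton]
                  rintro (hmem | hmem)
                  · exact hp₁v v (mem_edges_of_mem (Sym2.mem_mk_left v a) hmem) rfl
                  · rw [Sym2.eq_iff] at hmem
                    rcases hmem with ⟨h', _⟩ | ⟨_, h'⟩
                    · exact hne h'.symm
                    · exact hau h'
              · rw [SimpleGraph.Walk.edges_cons, SimpleGraph.Walk.edges_concat,
                  List.concat_eq_append]
            have hW₂ : ((p₂.concat h₂).cons huv.symm).IsCycle ∧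
                ((p₂.concat h₂).cons huv.symm).edges = s(v, u) :: (p₂.edges ++ [s(c, v)]) := by
              constructor
              · rw [SimpleGraph.Walk.cons_isCycle_iff]
                constructor
                · rw [SimpleGraph.Walk.isPath_def, SimpleGraph.Walk.support_concat,
                    List.nodup_append]
                  refine ⟨hp₂.support_nodup, by simp, ?_⟩
                  intro x hx y hx2 hxy
                  rcases List.mem_singleton.1 hx2 with rfl
                  exact hp₂v x hx hxy
                · rw [SimpleGraph.Walk.edges_concat, List.concat_eq_append,
                    List.mem_append, List.mem_singleton]
                  rintro (hmem | hmem)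
                  · apply heE₁
                    rw [hedges₁, show s(u, v) = s(v, u) from Sym2.eq_swap]
                    refine List.mem_cons_of_mem _ (List.mem_append_left _ ?_)
                    rw [hqedges]
                    exact List.mem_append_right _ hmem
                  · rw [Sym2.eq_iff] at hmem
                    rcases hmem with ⟨h', _⟩ | ⟨_, h'⟩
                    · exact hqs c q.end_mem_support h'.symm
                    · exact hcu h'.symm
              · rw [SimpleGraph.Walk.edges_cons, SimpleGraph.Walk.edges_concat,
                  List.concat_eq_append]
            -- locate g
            have hg₁ : g ∈ w₁.edges := hperm.mem_iff.2 hgw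
            rw [hedges₁] at hg₁
            have hcase : (g = s(v, a) ∨ g ∈ p₁.edges) ∨ (g ∈ p₂.edges ∨ g = s(c, v)) := by
              rcases List.mem_cons.1 hg₁ with rfl | hg₁
              · exact Or.inl (Or.inl rfl)
              rcases List.mem_append.1 hg₁ with hg₁ | hg₁
              · rw [hqedges] at hg₁
                rcases List.mem_append.1 hg₁ with hg₁ | hg₁
                · exact Or.inl (Or.inr hg₁)
                · exact Or.inr (Or.inl hg₁)
              · exact Or.inr (Or.inr (List.mem_singleton.1 hg₁))
            rcases hcase with hcase | hcase
            · -- use W₁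
              refine b1full hord huv hF'' hgE _ hW₁.1 ?_ ?_ hge ?_ ?_
              · rw [hW₁.2]
                exact List.mem_cons_of_mem _
                  (List.mem_append_right _ (List.mem_singleton.2 rfl))
              · rw [hW₁.2]
                rcases hcase with rfl | hcase
                · exact List.mem_cons_self
                · exact List.mem_cons_of_mem _ (List.mem_append_left _ hcase)
              · intro f hf
                rw [hW₁.2] at hf
                rcases List.mem_cons.1 hf with rfl | hf
                · exact hmaxw _ hva_mem
                rcases List.mem_append.1 hf with hf | hf
                · exact hmaxw _ (hp₁sub f hf)
                · rcases List.mem_singleton.1 hf with rfl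
                  exact le_of_lt (hsmall g hgE hge)
              · intro f hf hfg hfe
                rw [hW₁.2] at hf
                rcases List.mem_cons.1 hf with rfl | hf
                · exact hpreC _ hva_mem hfg hfe
                rcases List.mem_append.1 hf with hf | hf
                · exact hpreC _ (hp₁sub f hf) hfg hfe
                · rcases List.mem_singleton.1 hf with rfl
                  exact absurd rfl hfe
            · -- use W₂
              refine b1full hord huv hF'' hgE _ hW₂.1 ?_ ?_ hge ?_ ?_
              · rw [hW₂.2, show s(u, v) = s(v, u) from Sym2.eq_swap]
                exact List.mem_cons_self
              · rw [hW₂.2]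
                rcases hcase with hcase | rfl
                · exact List.mem_cons_of_mem _ (List.mem_append_left _ hcase)
                · exact List.mem_cons_of_mem _
                    (List.mem_append_right _ (List.mem_singleton.2 rfl))
              · intro f hf
                rw [hW₂.2] at hf
                rcases List.mem_cons.1 hf with rfl | hf
                · rw [show s(v, u) = s(u, v) from Sym2.eq_swap]
                  exact le_of_lt (hsmall g hgE hge)
                rcases List.mem_append.1 hf with hf | hf
                · exact hmaxw _ (hp₂sub f hf)
                · rcases List.mem_singleton.1 hf with rfl
                  exact hmaxw _ hcv_mem
              · intro f hf hfg hfe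
                rw [hW₂.2] at hf
                rcases List.mem_cons.1 hf with rfl | hf
                · exact absurd ((show s(v, u) = s(u, v) from Sym2.eq_swap)) hfe
                rcases List.mem_append.1 hf with hf | hf
                · exact hpreC _ (hp₂sub f hf) hfg hfe
                · rcases List.mem_singleton.1 hf with rfl
                  exact hpreC _ hcv_mem hfg hfe
          · -- v on the cycle but not u
            have hu' : ∀ x ∈ w.support, x ≠ u := fun x hx h => hu (h ▸ hx)
            set w₁ := w.rotate v hv with hw₁def
            have hw₁ : w₁.IsCycle := hw.rotate hv
            have hperm : List.Perm w₁.edges w.edges := (w.rotate_edges v hv).perm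
            have hu₁ : ∀ x ∈ w₁.support, x ≠ u := by
              rintro x hx rfl
              have h1 := mem_tail hw₁ hx
              have h2 := (w.support_rotate v hv).perm.mem_iff.1 h1
              exact hu (List.mem_of_mem_tail h2)
            have heE : s(u, v) ∉ w.edges := fun hh =>
              hu' u (mem_edges_of_mem u_mem_e hh) rfl
            refine b2a_proj huv hF'' hgE w₁ hw₁ hu₁ (hperm.mem_iff.2 hgw) ?_ ?_
            · intro f hf
              exact hmaxw f (hperm.mem_iff.1 hf)
            · intro f hf hfg
              refine hpreC f (hperm.mem_iff.1 hf) hfg ?_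
              rintro rfl
              exact heE (hperm.mem_iff.1 hf)
      · -- v not on the cycle at all
        have hv' : ∀ x ∈ w.support, x ≠ v := fun x hx h => hv (h ▸ hx)
        have heE : s(u, v) ∉ w.edges := fun hh =>
          hv' v (mem_edges_of_mem (Sym2.mem_mk_right u v) hh) rfl
        obtain ⟨w', hw's, hw'e⟩ := walk_up hne w hv'
        have hw'c : w'.IsCycle := cycle_of_eq hw hw's hw'e
        have hfixw : ∀ f ∈ w.edges, cmap u v f = f := fun f hf =>
          cmap_fix (fun hvf => hv' v (mem_edges_of_mem hvf hf) rfl)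
        refine proj_finish hF'' hgE w' hw'c (D := fun f => f ∈ w.edges) ?_ hmaxw ?_ ?_
        · intro f' hf'
          rw [hw'e] at hf'
          exact ⟨f', hf', hfixw f' hf'⟩
        · intro f hf hfg
          exact hpreC f hf hfg (fun hh => heE (hh ▸ hf))
        · rw [hw'e, hfixw g hgw]
          exact hgw
    · -- the image condition
      show (F.erase s(u, v)).image (Sym2.map fun w => if w = v then u else w) = F'
      have h1 : F.erase s(u, v) = F'.image σ' := by
        rw [hFdef]
        exact Finset.erase_insert hnotE
      rw [h1, hcm, Finset.image_image]
      ext f'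
      constructor
      · intro hf'
        obtain ⟨g', hg', heq⟩ := Finset.mem_image.1 hf'
        have := (hspec g' hg').2.1
        rw [Function.comp_apply, this] at heq
        exact heq ▸ hg'
      · intro hf'
        exact Finset.mem_image.2 ⟨f', hf', by
          rw [Function.comp_apply, (hspec f' hf').2.1]⟩
end
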